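/- arXiv:1901.03902 — 3 statements merged into one kernel-verified Lean document; each statement's English description precedes it below -/
import Mathlib

section
/- Fix x ∈ ℝ³. Let U ⊆ ℝ³ \ {0} be open and let λ : U → ℝ and q : U → ℝ³ be twice continuously differentiable maps such that for every p ∈ U one has Γ(x,p) · q(p) = λ(p) · q(p) and ⟨q(p), q(p)⟩ = 1 (Euclidean inner product). Then for every p ∈ U the Hessian matrix of λ at p (the 3×3 matrix with entries ∂²λ/∂p_j∂p_k (p)) equals 2 · ( Γ(x, q(p)) + (Dq(p))ᵀ · (λ(p)·I − Γ(x,p)) · Dq(p) ), where Dq(p) is the Jacobian matrix of q at p (with entries (Dq(p))_{ij} = ∂q_i/∂p_j (p)), I is the 3×3 identity matrix, and Γ(x, q(p)) denotes the Christoffel matrix evaluated at the vector q(p) in place of p. -/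
noncomputable section

open Matrix

/-- The Christoffel matrix `Γ(x,p)` with entries `Γ_{il} = Σ_{j,k} a_{ijkl}(x) p_j p_k`. -/
def christoffel (a : (Fin 3 → ℝ) → Fin 3 → Fin 3 → Fin 3 → Fin 3 → ℝ)
    (x p : Fin 3 → ℝ) : Matrix (Fin 3) (Fin 3) ℝ :=
  Matrix.of fun i l => ∑ j : Fin 3, ∑ k : Fin 3, a x i j k l * p j * p k

/-- The set of real eigenvalues of a `3 × 3` real matrix. -/
def eigSet (A : Matrix (Fin 3) (Fin 3) ℝ) : Set ℝ :=
  {μ : ℝ | ∃ v : Fin 3 → ℝ, v ≠ 0 ∧ A.mulVec v = μ • v}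

/-- The largest (real) eigenvalue of a `3 × 3` real matrix. -/
def lamMax (A : Matrix (Fin 3) (Fin 3) ℝ) : ℝ := sSup (eigSet A)

/-- `λ¹(x,p)`: the largest eigenvalue of the Christoffel matrix `Γ(x,p)`. -/
def lam1 (a : (Fin 3 → ℝ) → Fin 3 → Fin 3 → Fin 3 → Fin 3 → ℝ)
    (x p : Fin 3 → ℝ) : ℝ := lamMax (christoffel a x p)

/-- The symmetries `a_{ijkl} = a_{jikl} = a_{klij}` of the stiffness tensor. -/
def StiffSymm (a : (Fin 3 → ℝ) → Fin 3 → Fin 3 → Fin 3 → Fin 3 → ℝ) : Prop :=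
  ∀ (x : Fin 3 → ℝ) (i j k l : Fin 3),
    a x i j k l = a x j i k l ∧ a x i j k l = a x k l i j

/-- The positive-definiteness assumption: `Γ(x,p)` is positive definite for `p ≠ 0`. -/
def ChristoffelPosDef (a : (Fin 3 → ℝ) → Fin 3 → Fin 3 → Fin 3 → Fin 3 → ℝ) : Prop :=
  ∀ (x p : Fin 3 → ℝ), p ≠ 0 → (christoffel a x p).PosDef

/-- The gap condition: for every `p ≠ 0`, `λ¹(x,p)` is an eigenvalue of `Γ(x,p)`, it is a
simple eigenvalue (one-dimensional eigenspace), and every other eigenvalue is strictly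
smaller. -/
def GapCondition (a : (Fin 3 → ℝ) → Fin 3 → Fin 3 → Fin 3 → Fin 3 → ℝ) : Prop :=
  ∀ (x p : Fin 3 → ℝ), p ≠ 0 →
    lam1 a x p ∈ eigSet (christoffel a x p) ∧
    (∀ μ ∈ eigSet (christoffel a x p), μ = lam1 a x p ∨ μ < lam1 a x p) ∧
    Module.finrank ℝ
      (Module.End.eigenspace (Matrix.toLin' (christoffel a x p)) (lam1 a x p)) = 1

/-- Smoothness of the stiffness tensor. -/
def StiffSmooth (a : (Fin 3 → ℝ) → Fin 3 → Fin 3 → Fin 3 → Fin 3 → ℝ) : Prop :=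
  ∀ i j k l : Fin 3, ContDiff ℝ (⊤ : ℕ∞) fun x => a x i j k l


namespace HessAux

/-- Directional-derivative bundle. -/
def HasDD (f : (Fin 3 → ℝ) → ℝ) (y v : Fin 3 → ℝ) (d : ℝ) : Prop :=
  DifferentiableAt ℝ f y ∧ fderiv ℝ f y v = d

def uv (m : Fin 3) : Fin 3 → ℝ := Pi.single m 1

lemma hasDD_const (c : ℝ) (y v : Fin 3 → ℝ) : HasDD (fun _ => c) y v 0 :=
  ⟨differentiableAt_const c, by simp⟩

lemma hasDD_coord (j : Fin 3) (y v : Fin 3 → ℝ) : HasDD (fun z => z j) y v (v j) := by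
  have h : HasFDerivAt (fun z : Fin 3 → ℝ => z j)
      (ContinuousLinearMap.proj j : (Fin 3 → ℝ) →L[ℝ] ℝ) y :=
    (ContinuousLinearMap.proj j : (Fin 3 → ℝ) →L[ℝ] ℝ).hasFDerivAt
  exact ⟨h.differentiableAt, by rw [h.fderiv]; rfl⟩

lemma HasDD.mul {f g : (Fin 3 → ℝ) → ℝ} {y v : Fin 3 → ℝ} {d e : ℝ}
    (hf : HasDD f y v d) (hg : HasDD g y v e) :
    HasDD (fun z => f z * g z) y v (d * g y + f y * e) := by
  refine ⟨hf.1.mul hg.1, ?_⟩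
  rw [fderiv_fun_mul hf.1 hg.1]
  simp only [ContinuousLinearMap.add_apply, ContinuousLinearMap.smul_apply, smul_eq_mul,
    hf.2, hg.2]
  ring

lemma HasDD.add {f g : (Fin 3 → ℝ) → ℝ} {y v : Fin 3 → ℝ} {d e : ℝ}
    (hf : HasDD f y v d) (hg : HasDD g y v e) :
    HasDD (fun z => f z + g z) y v (d + e) := by
  refine ⟨hf.1.add hg.1, ?_⟩
  rw [fderiv_fun_add hf.1 hg.1]
  simp [hf.2, hg.2]

lemma HasDD.cmul {g : (Fin 3 → ℝ) → ℝ} {y v : Fin 3 → ℝ} {e : ℝ} (c : ℝ)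
    (hg : HasDD g y v e) : HasDD (fun z => c * g z) y v (c * e) := by
  have := (hasDD_const c y v).mul hg
  simpa using this

lemma hasDD_sum {ι : Type*} {s : Finset ι} {f : ι → (Fin 3 → ℝ) → ℝ} {d : ι → ℝ}
    {y v : Fin 3 → ℝ} (h : ∀ i ∈ s, HasDD (f i) y v (d i)) :
    HasDD (fun z => ∑ i ∈ s, f i z) y v (∑ i ∈ s, d i) := by
  refine ⟨DifferentiableAt.fun_sum (fun i hi => (h i hi).1), ?_⟩
  rw [fderiv_fun_sum (fun i hi => (h i hi).1)]
  simp only [ContinuousLinearMap.coe_sum', Finset.sum_apply]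
  exact Finset.sum_congr rfl fun i hi => (h i hi).2

lemma HasDD.congr_set {f g : (Fin 3 → ℝ) → ℝ} {y v : Fin 3 → ℝ} {d : ℝ} {U : Set (Fin 3 → ℝ)}
    (hU : IsOpen U) (hy : y ∈ U) (hfg : ∀ z ∈ U, f z = g z)
    (hf : HasDD f y v d) : HasDD g y v d := by
  have hev : f =ᶠ[nhds y] g := Filter.eventuallyEq_of_mem (hU.mem_nhds hy) hfg
  exact ⟨hf.1.congr_of_eventuallyEq hev.symm, by rw [← hev.fderiv_eq]; exact hf.2⟩

lemma HasDD.of_eq {f : (Fin 3 → ℝ) → ℝ} {y v : Fin 3 → ℝ} {d d' : ℝ}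
    (hf : HasDD f y v d) (h : d = d') : HasDD f y v d' := h ▸ hf

lemma collapse (c : Fin 3 → ℝ) (j : Fin 3) : ∑ k, c k * uv j k = c j := by
  simp [uv, Pi.single_apply]

lemma sum_delta_mul (f : Fin 3 → ℝ) (i' : Fin 3) :
    ∑ i, f i * (if i = i' then (1:ℝ) else 0) = f i' := by
  simp

end HessAux

open HessAux

/-- the Hessian identity (2.10). Fix `x ∈ ℝ³`. If `λ : U → ℝ` and
`q : U → ℝ³` are `C²` on an open set `U ⊆ ℝ³ \ {0}` with `Γ(x,p) q(p) = λ(p) q(p)` and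
`⟨q(p), q(p)⟩ = 1` on `U`, then the Hessian matrix of `λ` at `p ∈ U` equals
`2 (Γ(x, q(p)) + (Dq)ᵀ (λ(p) I − Γ(x,p)) Dq)`. -/

theorem hessian_of_eigenvalue_identity
    (a : (Fin 3 → ℝ) → Fin 3 → Fin 3 → Fin 3 → Fin 3 → ℝ)
    (hsymm : StiffSymm a)
    (x : Fin 3 → ℝ) (U : Set (Fin 3 → ℝ)) (hU : IsOpen U)
    (hU0 : U ⊆ {p : Fin 3 → ℝ | p ≠ 0})
    (lam : (Fin 3 → ℝ) → ℝ) (q : (Fin 3 → ℝ) → Fin 3 → ℝ)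
    (hlam : ContDiffOn ℝ 2 lam U) (hq : ContDiffOn ℝ 2 q U)
    (heig : ∀ p ∈ U, (christoffel a x p).mulVec (q p) = lam p • q p)
    (hunit : ∀ p ∈ U, ∑ i : Fin 3, q p i * q p i = 1) :
    ∀ p ∈ U,
      (Matrix.of fun j k : Fin 3 =>
          fderiv ℝ (fun y => fderiv ℝ lam y (Pi.single k (1 : ℝ))) p
            (Pi.single j (1 : ℝ))) =
        (2 : ℝ) •
          (christoffel a x (q p) +
            (Matrix.of fun i j : Fin 3 =>
                fderiv ℝ (fun y => q y i) p (Pi.single j (1 : ℝ)))ᵀ *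
              (lam p • (1 : Matrix (Fin 3) (Fin 3) ℝ) - christoffel a x p) *
            (Matrix.of fun i j : Fin 3 =>
                fderiv ℝ (fun y => q y i) p (Pi.single j (1 : ℝ)))) := by
  have s1 : ∀ i j k l, a x i j k l = a x j i k l := fun i j k l => (hsymm x i j k l).1
  have s2 : ∀ i j k l, a x i j k l = a x k l i j := fun i j k l => (hsymm x i j k l).2
  have s3 : ∀ i j k l, a x i j k l = a x i j l k := by
    intro i j k l
    rw [s2 i j k l, s1 k l i j, s2 l k i j]
  -- componentwise eigen equation
  have hA : ∀ y ∈ U, ∀ i : Fin 3,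
      ∑ l, (∑ j, ∑ k, a x i j k l * y j * y k) * q y l = lam y * q y i := by
    intro y hy i
    have h := congrFun (heig y hy) i
    simpa [christoffel, Matrix.mulVec, dotProduct] using h
  -- differentiability of components
  have hdq : ∀ y ∈ U, ∀ i, DifferentiableAt ℝ (fun z => q z i) y := by
    intro y hy i
    have h : DifferentiableAt ℝ q y :=
      (hq.differentiableOn two_ne_zero).differentiableAt (hU.mem_nhds hy)
    exact (differentiableAt_pi.mp h) i
  have hdlam : ∀ y ∈ U, DifferentiableAt ℝ lam y := fun y hy =>
    (hlam.differentiableOn two_ne_zero).differentiableAt (hU.mem_nhds hy)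
  -- symmetry of the Christoffel quadratic form
  have hGsym : ∀ (y : Fin 3 → ℝ) (i l : Fin 3),
      (∑ j, ∑ k, a x i j k l * y j * y k) = ∑ j, ∑ k, a x l j k i * y j * y k := by
    intro y i l
    rw [Finset.sum_comm]
    refine Finset.sum_congr rfl fun u _ => Finset.sum_congr rfl fun v _ => ?_
    rw [s1 i v u l, s2 v i u l, s1 u l v i]
    ring
  -- HasDD of q-components
  have hQ : ∀ y ∈ U, ∀ (i : Fin 3) (v : Fin 3 → ℝ),
      HasDD (fun z => q z i) y v (fderiv ℝ (fun z => q z i) y v) :=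
    fun y hy i v => ⟨hdq y hy i, rfl⟩
  -- orthogonality q ⟂ dq
  have hOrth : ∀ y ∈ U, ∀ v : Fin 3 → ℝ,
      ∑ i, q y i * fderiv ℝ (fun z => q z i) y v = 0 := by
    intro y hy v
    have h1 : HasDD (fun z => ∑ i, q z i * q z i) y v
        (∑ i, (fderiv ℝ (fun z => q z i) y v * q y i
          + q y i * fderiv ℝ (fun z => q z i) y v)) :=
      hasDD_sum (fun i _ => (hQ y hy i v).mul (hQ y hy i v))
    have h3 : HasDD (fun z => ∑ i, q z i * q z i) y v 0 :=
      HasDD.congr_set hU hy (fun z hz => (hunit z hz).symm) (hasDD_const 1 y v)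
    have h4 : (∑ i, (fderiv ℝ (fun z => q z i) y v * q y i
        + q y i * fderiv ℝ (fun z => q z i) y v)) = 0 := h1.2.symm.trans h3.2
    have h5 : (∑ i, (fderiv ℝ (fun z => q z i) y v * q y i
        + q y i * fderiv ℝ (fun z => q z i) y v))
        = 2 * ∑ i, q y i * fderiv ℝ (fun z => q z i) y v := by
      rw [Finset.mul_sum]
      exact Finset.sum_congr rfl fun i _ => by ring
    rw [h5] at h4
    linarith
  -- lam as explicit function on U
  have hC : ∀ y ∈ U, lam y
      = ∑ i, ∑ l, (∑ j, ∑ k, a x i j k l * y j * y k) * (q y i * q y l) := by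
    intro y hy
    calc lam y = lam y * ∑ i, q y i * q y i := by rw [hunit y hy]; ring
    _ = ∑ i, (∑ l, (∑ j, ∑ k, a x i j k l * y j * y k) * q y l) * q y i := by
        rw [Finset.mul_sum]
        exact Finset.sum_congr rfl fun i _ => by rw [hA y hy i]; ring
    _ = ∑ i, ∑ l, (∑ j, ∑ k, a x i j k l * y j * y k) * (q y i * q y l) := by
        refine Finset.sum_congr rfl fun i _ => ?_
        rw [Finset.sum_mul]
        exact Finset.sum_congr rfl fun l _ => by ring
  -- HasDD of the quadratic coefficient P i l
  have hP : ∀ (i l : Fin 3) (y : Fin 3 → ℝ) (m : Fin 3),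
      HasDD (fun z => ∑ j, ∑ k, a x i j k l * z j * z k) y (uv m)
        (∑ k, a x i m k l * y k + ∑ j, a x i j m l * y j) := by
    intro i l y m
    have hraw : HasDD (fun z => ∑ j, ∑ k, a x i j k l * z j * z k) y (uv m)
        (∑ j, ∑ k, ((a x i j k l * uv m j) * y k + (a x i j k l * y j) * uv m k)) := by
      refine hasDD_sum fun j _ => hasDD_sum fun k _ => ?_
      exact ((HasDD.cmul (a x i j k l) (hasDD_coord j y (uv m))).mul (hasDD_coord k y (uv m)))
    refine hraw.of_eq ?_
    have h1 : ∀ j : Fin 3, ∑ k, (a x i j k l * uv m j * y k + a x i j k l * y j * uv m k)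
        = (∑ k, a x i j k l * y k) * uv m j + a x i j m l * y j := by
      intro j
      rw [Finset.sum_add_distrib]
      congr 1
      · rw [Finset.sum_mul]
        exact Finset.sum_congr rfl fun k _ => by ring
      · exact collapse (fun k => a x i j k l * y j) m
    rw [Finset.sum_congr rfl (fun j _ => h1 j), Finset.sum_add_distrib]
    congr 1
    exact collapse (fun j => ∑ k, a x i j k l * y k) m
  -- the tangential part of the gradient vanishes
  have hfin : ∀ y ∈ U, ∀ m : Fin 3,
      ∑ i, fderiv ℝ (fun z => q z i) y (uv m) * (lam y * q y i) = 0 := by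
    intro y hy m
    have ho := hOrth y hy (uv m)
    have h : ∑ i, fderiv ℝ (fun z => q z i) y (uv m) * (lam y * q y i)
        = lam y * ∑ i, q y i * fderiv ℝ (fun z => q z i) y (uv m) := by
      rw [Finset.mul_sum]
      exact Finset.sum_congr rfl fun i _ => by ring
    rw [h, ho, mul_zero]
  -- gradient formula
  have hGrad : ∀ y ∈ U, ∀ m : Fin 3, fderiv ℝ lam y (uv m)
      = ∑ i, ∑ l, (∑ k, a x i m k l * y k + ∑ j, a x i j m l * y j) * (q y i * q y l) := by
    intro y hy m
    have hF : HasDD (fun z => ∑ i, ∑ l, (∑ j, ∑ k, a x i j k l * z j * z k) * (q z i * q z l))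
        y (uv m)
        (∑ i, ∑ l, ((∑ k, a x i m k l * y k + ∑ j, a x i j m l * y j) * (q y i * q y l)
          + (∑ j, ∑ k, a x i j k l * y j * y k) *
            (fderiv ℝ (fun z => q z i) y (uv m) * q y l
              + q y i * fderiv ℝ (fun z => q z l) y (uv m)))) := by
      refine hasDD_sum fun i _ => hasDD_sum fun l _ => ?_
      exact (hP i l y m).mul ((hQ y hy i (uv m)).mul (hQ y hy l (uv m)))
    have hlamDD : HasDD lam y (uv m)
        (∑ i, ∑ l, ((∑ k, a x i m k l * y k + ∑ j, a x i j m l * y j) * (q y i * q y l)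
          + (∑ j, ∑ k, a x i j k l * y j * y k) *
            (fderiv ℝ (fun z => q z i) y (uv m) * q y l
              + q y i * fderiv ℝ (fun z => q z l) y (uv m)))) :=
      HasDD.congr_set hU hy (fun z hz => (hC z hz).symm) hF
    rw [hlamDD.2]
    have hA1 : ∑ i, ∑ l, (∑ j, ∑ k, a x i j k l * y j * y k)
        * (fderiv ℝ (fun z => q z i) y (uv m) * q y l) = 0 := by
      have h1 : ∀ i : Fin 3, ∑ l, (∑ j, ∑ k, a x i j k l * y j * y k)
          * (fderiv ℝ (fun z => q z i) y (uv m) * q y l)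
          = fderiv ℝ (fun z => q z i) y (uv m) * (lam y * q y i) := by
        intro i
        rw [← hA y hy i, Finset.mul_sum]
        exact Finset.sum_congr rfl fun l _ => by ring
      rw [Finset.sum_congr rfl fun i _ => h1 i]
      exact hfin y hy m
    have hA2 : ∑ i, ∑ l, (∑ j, ∑ k, a x i j k l * y j * y k)
        * (q y i * fderiv ℝ (fun z => q z l) y (uv m)) = 0 := by
      rw [Finset.sum_comm]
      have key : ∀ l : Fin 3, ∑ i, (∑ j, ∑ k, a x i j k l * y j * y k)
          * (q y i * fderiv ℝ (fun z => q z l) y (uv m))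
          = fderiv ℝ (fun z => q z l) y (uv m) * (lam y * q y l) := by
        intro l
        have e1 : ∀ i : Fin 3, (∑ j, ∑ k, a x i j k l * y j * y k)
            * (q y i * fderiv ℝ (fun z => q z l) y (uv m))
            = fderiv ℝ (fun z => q z l) y (uv m)
              * ((∑ j, ∑ k, a x l j k i * y j * y k) * q y i) := by
          intro i
          rw [hGsym y i l]
          ring
        rw [Finset.sum_congr rfl fun i _ => e1 i, ← Finset.mul_sum, hA y hy l]
      rw [Finset.sum_congr rfl fun l _ => key l]
      exact hfin y hy m
    have hsplit : (∑ i, ∑ l, ((∑ k, a x i m k l * y k + ∑ j, a x i j m l * y j) * (q y i * q y l)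
          + (∑ j, ∑ k, a x i j k l * y j * y k) *
            (fderiv ℝ (fun z => q z i) y (uv m) * q y l
              + q y i * fderiv ℝ (fun z => q z l) y (uv m))))
        = (∑ i, ∑ l, (∑ k, a x i m k l * y k + ∑ j, a x i j m l * y j) * (q y i * q y l))
          + ((∑ i, ∑ l, (∑ j, ∑ k, a x i j k l * y j * y k)
              * (fderiv ℝ (fun z => q z i) y (uv m) * q y l))
            + (∑ i, ∑ l, (∑ j, ∑ k, a x i j k l * y j * y k)
              * (q y i * fderiv ℝ (fun z => q z l) y (uv m)))) := by
      rw [← Finset.sum_add_distrib, ← Finset.sum_add_distrib]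
      refine Finset.sum_congr rfl fun i _ => ?_
      rw [← Finset.sum_add_distrib, ← Finset.sum_add_distrib]
      exact Finset.sum_congr rfl fun l _ => by ring
    rw [hsplit, hA1, hA2, add_zero, add_zero]
  -- derivative of the eigenvector equation
  have hEigD : ∀ p ∈ U, ∀ i m : Fin 3,
      (∑ l, (∑ k, a x i m k l * p k + ∑ j, a x i j m l * p j) * q p l)
        + ∑ l, (∑ j, ∑ k, a x i j k l * p j * p k) * fderiv ℝ (fun z => q z l) p (uv m)
      = fderiv ℝ lam p (uv m) * q p i + lam p * fderiv ℝ (fun z => q z i) p (uv m) := by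
    intro p hp i m
    have hL : HasDD (fun z => ∑ l, (∑ j, ∑ k, a x i j k l * z j * z k) * q z l) p (uv m)
        (∑ l, ((∑ k, a x i m k l * p k + ∑ j, a x i j m l * p j) * q p l
          + (∑ j, ∑ k, a x i j k l * p j * p k) * fderiv ℝ (fun z => q z l) p (uv m))) :=
      hasDD_sum fun l _ => (hP i l p m).mul (hQ p hp l (uv m))
    have hR : HasDD (fun z => lam z * q z i) p (uv m)
        (fderiv ℝ lam p (uv m) * q p i + lam p * fderiv ℝ (fun z => q z i) p (uv m)) :=
      HasDD.mul ⟨hdlam p hp, rfl⟩ (hQ p hp i (uv m))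
    have hLR : HasDD (fun z => lam z * q z i) p (uv m)
        (∑ l, ((∑ k, a x i m k l * p k + ∑ j, a x i j m l * p j) * q p l
          + (∑ j, ∑ k, a x i j k l * p j * p k) * fderiv ℝ (fun z => q z l) p (uv m))) :=
      HasDD.congr_set hU hp (fun z hz => hA z hz i) hL
    have heq := hLR.2.symm.trans hR.2
    rw [Finset.sum_add_distrib] at heq
    exact heq
  -- the Hessian of lam, raw form
  have hHess : ∀ p ∈ U, ∀ j m : Fin 3,
      fderiv ℝ (fun y => fderiv ℝ lam y (uv m)) p (uv j)
      = ∑ i, ∑ l, ((a x i m j l + a x i j m l) * (q p i * q p l)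
        + (∑ k, a x i m k l * p k + ∑ j', a x i j' m l * p j')
          * (fderiv ℝ (fun z => q z i) p (uv j) * q p l
            + q p i * fderiv ℝ (fun z => q z l) p (uv j))) := by
    intro p hp j m
    have hev : (fun y => fderiv ℝ lam y (uv m)) =ᶠ[nhds p]
        (fun y => ∑ i, ∑ l, (∑ k, a x i m k l * y k + ∑ j', a x i j' m l * y j')
          * (q y i * q y l)) :=
      Filter.eventuallyEq_of_mem (hU.mem_nhds hp) (fun z hz => hGrad z hz m)
    rw [hev.fderiv_eq]
    have hR1 : ∀ i l : Fin 3,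
        HasDD (fun z => ∑ k, a x i m k l * z k) p (uv j) (a x i m j l) := by
      intro i l
      have h := hasDD_sum (s := Finset.univ)
        (fun k _ => HasDD.cmul (a x i m k l) (hasDD_coord k p (uv j)))
      exact h.of_eq (collapse (fun k => a x i m k l) j)
    have hR2 : ∀ i l : Fin 3,
        HasDD (fun z => ∑ j', a x i j' m l * z j') p (uv j) (a x i j m l) := by
      intro i l
      have h := hasDD_sum (s := Finset.univ)
        (fun k _ => HasDD.cmul (a x i k m l) (hasDD_coord k p (uv j)))
      exact h.of_eq (collapse (fun k => a x i k m l) j)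
    have hDD : HasDD (fun y => ∑ i, ∑ l, (∑ k, a x i m k l * y k + ∑ j', a x i j' m l * y j')
          * (q y i * q y l)) p (uv j)
        (∑ i, ∑ l, ((a x i m j l + a x i j m l) * (q p i * q p l)
          + (∑ k, a x i m k l * p k + ∑ j', a x i j' m l * p j')
            * (fderiv ℝ (fun z => q z i) p (uv j) * q p l
              + q p i * fderiv ℝ (fun z => q z l) p (uv j)))) := by
      refine hasDD_sum fun i _ => hasDD_sum fun l _ => ?_
      exact ((hR1 i l).add (hR2 i l)).mul ((hQ p hp i (uv j)).mul (hQ p hp l (uv j)))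
    exact hDD.2
  -- symmetry of the derivative-coefficient matrix R
  have hRsym : ∀ (p : Fin 3 → ℝ) (i l m : Fin 3),
      (∑ k, a x i m k l * p k + ∑ j', a x i j' m l * p j')
      = (∑ k, a x l m k i * p k + ∑ j', a x l j' m i * p j') := by
    intro p i l m
    have h1 : ∑ k, a x l m k i * p k = ∑ k, a x i k m l * p k :=
      Finset.sum_congr rfl fun k _ => by rw [s2 l m k i, s1 k i l m, s3 i k l m]
    have h2 : ∑ k, a x l k m i * p k = ∑ k, a x i m k l * p k :=
      Finset.sum_congr rfl fun k _ => by rw [s2 l k m i, s1 m i l k, s3 i m l k]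
    rw [h1, h2]
    ring
  -- the key scalar identity
  have key : ∀ p ∈ U, ∀ j m : Fin 3,
      fderiv ℝ (fun y => fderiv ℝ lam y (uv m)) p (uv j)
      = 2 * ((∑ i, ∑ l, a x j i l m * (q p i * q p l))
        + ∑ i, fderiv ℝ (fun z => q z i) p (uv j)
            * (lam p * fderiv ℝ (fun z => q z i) p (uv m)
              - ∑ l, (∑ jj, ∑ kk, a x i jj kk l * p jj * p kk)
                  * fderiv ℝ (fun z => q z l) p (uv m))) := by
    intro p hp j m
    rw [hHess p hp j m]
    have hsplit : (∑ i, ∑ l, ((a x i m j l + a x i j m l) * (q p i * q p l)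
          + (∑ k, a x i m k l * p k + ∑ j', a x i j' m l * p j')
            * (fderiv ℝ (fun z => q z i) p (uv j) * q p l
              + q p i * fderiv ℝ (fun z => q z l) p (uv j))))
        = (∑ i, ∑ l, (a x i m j l + a x i j m l) * (q p i * q p l))
          + ∑ i, ∑ l, (∑ k, a x i m k l * p k + ∑ j', a x i j' m l * p j')
            * (fderiv ℝ (fun z => q z i) p (uv j) * q p l
              + q p i * fderiv ℝ (fun z => q z l) p (uv j)) := by
      rw [← Finset.sum_add_distrib]
      exact Finset.sum_congr rfl fun i _ => Finset.sum_add_distrib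
    rw [hsplit]
    -- the Gamma(q) part
    have hpart2 : ∑ i, ∑ l, a x i j m l * (q p i * q p l)
        = ∑ i, ∑ l, a x j i l m * (q p i * q p l) :=
      Finset.sum_congr rfl fun i _ => Finset.sum_congr rfl fun l _ => by
        rw [s1 i j m l, s3 j i m l]
    have hpart1 : ∑ i, ∑ l, a x i m j l * (q p i * q p l)
        = ∑ i, ∑ l, a x j i l m * (q p i * q p l) := by
      have h : ∑ i, ∑ l, a x i m j l * (q p i * q p l)
          = ∑ i, ∑ l, a x j l i m * (q p i * q p l) :=
        Finset.sum_congr rfl fun i _ => Finset.sum_congr rfl fun l _ => by rw [s2 i m j l]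
      rw [h, Finset.sum_comm]
      exact Finset.sum_congr rfl fun u _ => Finset.sum_congr rfl fun v _ => by ring
    have hS1 : ∑ i, ∑ l, (a x i m j l + a x i j m l) * (q p i * q p l)
        = 2 * ∑ i, ∑ l, a x j i l m * (q p i * q p l) := by
      have hsp : ∑ i, ∑ l, (a x i m j l + a x i j m l) * (q p i * q p l)
          = (∑ i, ∑ l, a x i m j l * (q p i * q p l))
            + ∑ i, ∑ l, a x i j m l * (q p i * q p l) := by
        rw [← Finset.sum_add_distrib]
        refine Finset.sum_congr rfl fun i _ => ?_
        rw [← Finset.sum_add_distrib]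
        exact Finset.sum_congr rfl fun l _ => by ring
      rw [hsp, hpart1, hpart2]
      ring
    rw [hS1]
    -- the Dq part
    have hS2split : ∑ i, ∑ l, (∑ k, a x i m k l * p k + ∑ j', a x i j' m l * p j')
          * (fderiv ℝ (fun z => q z i) p (uv j) * q p l
            + q p i * fderiv ℝ (fun z => q z l) p (uv j))
        = (∑ i, ∑ l, (∑ k, a x i m k l * p k + ∑ j', a x i j' m l * p j')
            * (fderiv ℝ (fun z => q z i) p (uv j) * q p l))
          + ∑ i, ∑ l, (∑ k, a x i m k l * p k + ∑ j', a x i j' m l * p j')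
            * (q p i * fderiv ℝ (fun z => q z l) p (uv j)) := by
      rw [← Finset.sum_add_distrib]
      refine Finset.sum_congr rfl fun i _ => ?_
      rw [← Finset.sum_add_distrib]
      exact Finset.sum_congr rfl fun l _ => by ring
    have hswap : ∑ i, ∑ l, (∑ k, a x i m k l * p k + ∑ j', a x i j' m l * p j')
          * (q p i * fderiv ℝ (fun z => q z l) p (uv j))
        = ∑ i, ∑ l, (∑ k, a x i m k l * p k + ∑ j', a x i j' m l * p j')
          * (fderiv ℝ (fun z => q z i) p (uv j) * q p l) := by
      rw [Finset.sum_comm]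
      refine Finset.sum_congr rfl fun u _ => Finset.sum_congr rfl fun v _ => ?_
      rw [hRsym p v u m]
      ring
    rw [hS2split, hswap]
    have hT : (∑ i, ∑ l, (∑ k, a x i m k l * p k + ∑ j', a x i j' m l * p j')
          * (fderiv ℝ (fun z => q z i) p (uv j) * q p l))
        = ∑ i, fderiv ℝ (fun z => q z i) p (uv j)
            * (lam p * fderiv ℝ (fun z => q z i) p (uv m)
              - ∑ l, (∑ jj, ∑ kk, a x i jj kk l * p jj * p kk)
                  * fderiv ℝ (fun z => q z l) p (uv m)) := by
      have h1 : ∀ i : Fin 3, ∑ l, (∑ k, a x i m k l * p k + ∑ j', a x i j' m l * p j')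
            * (fderiv ℝ (fun z => q z i) p (uv j) * q p l)
          = fderiv ℝ lam p (uv m) * (q p i * fderiv ℝ (fun z => q z i) p (uv j))
            + fderiv ℝ (fun z => q z i) p (uv j)
              * (lam p * fderiv ℝ (fun z => q z i) p (uv m)
                - ∑ l, (∑ jj, ∑ kk, a x i jj kk l * p jj * p kk)
                    * fderiv ℝ (fun z => q z l) p (uv m)) := by
        intro i
        have h2 : ∑ l, (∑ k, a x i m k l * p k + ∑ j', a x i j' m l * p j')
              * (fderiv ℝ (fun z => q z i) p (uv j) * q p l)
            = fderiv ℝ (fun z => q z i) p (uv j)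
              * ∑ l, (∑ k, a x i m k l * p k + ∑ j', a x i j' m l * p j') * q p l := by
          rw [Finset.mul_sum]
          exact Finset.sum_congr rfl fun l _ => by ring
        have h3 : ∑ l, (∑ k, a x i m k l * p k + ∑ j', a x i j' m l * p j') * q p l
            = fderiv ℝ lam p (uv m) * q p i
              + lam p * fderiv ℝ (fun z => q z i) p (uv m)
              - ∑ l, (∑ jj, ∑ kk, a x i jj kk l * p jj * p kk)
                  * fderiv ℝ (fun z => q z l) p (uv m) := by
          have h4 := hEigD p hp i m
          linarith
        rw [h2, h3]
        ring
      rw [Finset.sum_congr rfl fun i _ => h1 i, Finset.sum_add_distrib, ← Finset.mul_sum,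
        hOrth p hp (uv j), mul_zero, zero_add]
    rw [hT]
    ring
  intro p hp
  ext j m
  show fderiv ℝ (fun y => fderiv ℝ lam y (HessAux.uv m)) p (HessAux.uv j) = _
  rw [key p hp j m]
  simp only [Matrix.smul_apply, Matrix.add_apply, Matrix.mul_apply, Matrix.transpose_apply,
    Matrix.sub_apply, Matrix.one_apply, Matrix.of_apply, smul_eq_mul, christoffel]
  simp only [HessAux.uv]
  have hA' : ∑ i, ∑ l, a x j i l m * (q p i * q p l)
      = ∑ i, ∑ l, a x j i l m * q p i * q p l :=
    Finset.sum_congr rfl fun i _ => Finset.sum_congr rfl fun l _ => by ring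
  have hS : ∑ i, fderiv ℝ (fun z => q z i) p (Pi.single j 1)
        * (lam p * fderiv ℝ (fun z => q z i) p (Pi.single m 1)
          - ∑ l, (∑ jj, ∑ kk, a x i jj kk l * p jj * p kk)
              * fderiv ℝ (fun z => q z l) p (Pi.single m 1))
      = (∑ i, lam p * (fderiv ℝ (fun z => q z i) p (Pi.single j 1)
            * fderiv ℝ (fun z => q z i) p (Pi.single m 1)))
        - ∑ i, fderiv ℝ (fun z => q z i) p (Pi.single j 1)
            * ∑ l, (∑ jj, ∑ kk, a x i jj kk l * p jj * p kk)
              * fderiv ℝ (fun z => q z l) p (Pi.single m 1) := by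
    rw [← Finset.sum_sub_distrib]
    exact Finset.sum_congr rfl fun i _ => by ring
  have hS' : ∑ i', (∑ i, fderiv ℝ (fun z => q z i) p (Pi.single j 1)
          * ((lam p * if i = i' then 1 else 0)
            - ∑ jj, ∑ kk, a x i jj kk i' * p jj * p kk))
        * fderiv ℝ (fun z => q z i') p (Pi.single m 1)
      = (∑ i, lam p * (fderiv ℝ (fun z => q z i) p (Pi.single j 1)
            * fderiv ℝ (fun z => q z i) p (Pi.single m 1)))
        - ∑ i, fderiv ℝ (fun z => q z i) p (Pi.single j 1)
            * ∑ l, (∑ jj, ∑ kk, a x i jj kk l * p jj * p kk)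
              * fderiv ℝ (fun z => q z l) p (Pi.single m 1) := by
    have h5 : ∀ i' : Fin 3, (∑ i, fderiv ℝ (fun z => q z i) p (Pi.single j 1)
          * ((lam p * if i = i' then 1 else 0)
            - ∑ jj, ∑ kk, a x i jj kk i' * p jj * p kk))
        = lam p * fderiv ℝ (fun z => q z i') p (Pi.single j 1)
          - ∑ i, fderiv ℝ (fun z => q z i) p (Pi.single j 1)
              * ∑ jj, ∑ kk, a x i jj kk i' * p jj * p kk := by
      intro i'
      have h6 : ∀ i : Fin 3, fderiv ℝ (fun z => q z i) p (Pi.single j 1)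
            * ((lam p * if i = i' then 1 else 0)
              - ∑ jj, ∑ kk, a x i jj kk i' * p jj * p kk)
          = (if i = i' then lam p * fderiv ℝ (fun z => q z i) p (Pi.single j 1) else 0)
            - fderiv ℝ (fun z => q z i) p (Pi.single j 1)
              * ∑ jj, ∑ kk, a x i jj kk i' * p jj * p kk := by
        intro i
        by_cases h : i = i' <;> simp [h] <;> ring
      rw [Finset.sum_congr rfl fun i _ => h6 i, Finset.sum_sub_distrib]
      congr 1
      simp
    rw [Finset.sum_congr rfl fun i' _ => by rw [h5 i']]
    have h7 : ∀ i' : Fin 3, (lam p * fderiv ℝ (fun z => q z i') p (Pi.single j 1)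
          - ∑ i, fderiv ℝ (fun z => q z i) p (Pi.single j 1)
              * ∑ jj, ∑ kk, a x i jj kk i' * p jj * p kk)
        * fderiv ℝ (fun z => q z i') p (Pi.single m 1)
        = lam p * (fderiv ℝ (fun z => q z i') p (Pi.single j 1)
            * fderiv ℝ (fun z => q z i') p (Pi.single m 1))
          - ∑ i, fderiv ℝ (fun z => q z i) p (Pi.single j 1)
              * ((∑ jj, ∑ kk, a x i jj kk i' * p jj * p kk)
                * fderiv ℝ (fun z => q z i') p (Pi.single m 1)) := by
      intro i'
      rw [sub_mul, Finset.sum_mul]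
      congr 1
      · ring
      · exact Finset.sum_congr rfl fun i _ => by ring
    rw [Finset.sum_congr rfl fun i' _ => h7 i', Finset.sum_sub_distrib]
    congr 1
    rw [Finset.sum_comm]
    exact Finset.sum_congr rfl fun i _ => by rw [Finset.mul_sum]
  rw [hA', hS, hS']


end
end

section
/- Assume a is C^∞ and that both the positive-definiteness assumption and the gap condition hold. Then for every fixed x ∈ ℝ³ the function p ↦ λ¹(x,p) is C^∞ on ℝ³ \ {0}, and for every p ∈ ℝ³ \ {0} its Hessian at p (the second derivative of p ↦ λ¹(x,p) at p, viewed as a symmetric bilinear form on ℝ³) is positive definite. -/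
noncomputable section

open Matrix

/-! ### Auxiliary lemmas -/

namespace Lam1Aux

variable {a : (Fin 3 → ℝ) → Fin 3 → Fin 3 → Fin 3 → Fin 3 → ℝ}

lemma symm_last (hsymm : StiffSymm a) (x : Fin 3 → ℝ) (i j k l : Fin 3) :
    a x i j k l = a x i j l k := by
  rw [(hsymm x i j k l).2, (hsymm x k l i j).1, (hsymm x l k i j).2]

lemma symm_flip (hsymm : StiffSymm a) (x : Fin 3 → ℝ) (i j k l : Fin 3) :
    a x i j k l = a x l k j i := by
  rw [(hsymm x i j k l).2, (hsymm x k l i j).1, symm_last hsymm]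

lemma christoffel_isHermitian (hsymm : StiffSymm a) (x p : Fin 3 → ℝ) :
    (christoffel a x p).IsHermitian := by
  ext l i
  simp only [christoffel, conjTranspose_apply, of_apply, star_trivial]
  calc ∑ j : Fin 3, ∑ k : Fin 3, a x i j k l * p j * p k
      = ∑ j : Fin 3, ∑ k : Fin 3, a x l k j i * p j * p k := by
        exact Finset.sum_congr rfl fun j _ => Finset.sum_congr rfl fun k _ => by
          rw [symm_flip hsymm]
    _ = ∑ j : Fin 3, ∑ k : Fin 3, a x l j k i * p j * p k := by
        rw [Finset.sum_comm]
        exact Finset.sum_congr rfl fun j _ => Finset.sum_congr rfl fun k _ => by ring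

abbrev I4 := Fin 3 × Fin 3 × Fin 3 × Fin 3

def sigma4 : I4 ≃ I4 where
  toFun t := (t.2.2.2, t.2.2.1, t.2.1, t.1)
  invFun t := (t.2.2.2, t.2.2.1, t.2.1, t.1)
  left_inv := fun ⟨_, _, _, _⟩ => rfl
  right_inv := fun ⟨_, _, _, _⟩ => rfl

lemma quadForm_expand (x q w : Fin 3 → ℝ) :
    w ⬝ᵥ (christoffel a x q).mulVec w
      = ∑ t : I4, w t.1 * (a x t.1 t.2.2.1 t.2.2.2 t.2.1 * q t.2.2.1 * q t.2.2.2 * w t.2.1) := by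
  simp only [dotProduct, mulVec, christoffel, of_apply, Finset.mul_sum, Finset.sum_mul,
    Fintype.sum_prod_type]

/-- The key "swap" identity `v ⬝ Γ(x,p) v = p ⬝ Γ(x,v) p`. -/
lemma swap_identity (hsymm : StiffSymm a) (x p v : Fin 3 → ℝ) :
    v ⬝ᵥ (christoffel a x p).mulVec v = p ⬝ᵥ (christoffel a x v).mulVec p := by
  rw [quadForm_expand, quadForm_expand]
  refine Fintype.sum_equiv sigma4 _ _ fun ⟨i, l, j, k⟩ => ?_
  simp only [sigma4, Equiv.coe_fn_mk]
  rw [(hsymm x k l i j).2]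
  ring

lemma christoffel_zero (x : Fin 3 → ℝ) : christoffel a x 0 = 0 := by
  ext i l; simp [christoffel]

lemma lam1_zero (x : Fin 3 → ℝ) : lam1 a x 0 = 0 := by
  have h : eigSet (christoffel a x (0 : Fin 3 → ℝ)) = {0} := by
    rw [christoffel_zero]
    ext μ
    simp only [eigSet, Set.mem_setOf_eq, Set.mem_singleton_iff, zero_mulVec]
    constructor
    · rintro ⟨v, hv, h⟩
      by_contra hμ
      apply hv
      funext i
      have h2 := congrFun h.symm i
      simp only [Pi.smul_apply, Pi.zero_apply, smul_eq_mul] at h2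
      simpa [hμ] using (mul_eq_zero.mp h2).resolve_left hμ
    · rintro rfl
      exact ⟨fun _ => 1, fun h => one_ne_zero (congrFun h 0), by simp⟩
  rw [lam1, lamMax, h, csSup_singleton]

lemma contDiff_entry (x : Fin 3 → ℝ) (i l : Fin 3) :
    ContDiff ℝ (⊤ : ℕ∞) (fun q : Fin 3 → ℝ => christoffel a x q i l) := by
  simp only [christoffel, of_apply]
  apply ContDiff.sum; intro j _
  apply ContDiff.sum; intro k _
  exact (contDiff_const.mul ((ContinuousLinearMap.proj j : (Fin 3 → ℝ) →L[ℝ] ℝ).contDiff)).mul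
    ((ContinuousLinearMap.proj k : (Fin 3 → ℝ) →L[ℝ] ℝ).contDiff)

lemma dotProduct_self_nonneg' (v : Fin 3 → ℝ) : 0 ≤ v ⬝ᵥ v :=
  Finset.sum_nonneg fun i _ => mul_self_nonneg (v i)

lemma exists_unit_eigvec {A : Matrix (Fin 3) (Fin 3) ℝ} {L : ℝ}
    (hmem : ∃ v : Fin 3 → ℝ, v ≠ 0 ∧ A.mulVec v = L • v) :
    ∃ u : Fin 3 → ℝ, u ⬝ᵥ u = 1 ∧ A.mulVec u = L • u := by
  obtain ⟨v, hv, hAv⟩ := hmem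
  have hvv : 0 < v ⬝ᵥ v :=
    lt_of_le_of_ne (dotProduct_self_nonneg' v) fun h => hv (dotProduct_self_eq_zero.mp h.symm)
  set c : ℝ := (Real.sqrt (v ⬝ᵥ v))⁻¹ with hc
  refine ⟨c • v, ?_, ?_⟩
  · have h2 : Real.sqrt (v ⬝ᵥ v) * Real.sqrt (v ⬝ᵥ v) = v ⬝ᵥ v := Real.mul_self_sqrt (le_of_lt hvv)
    rw [smul_dotProduct, dotProduct_smul, smul_eq_mul, smul_eq_mul, hc,
      ← mul_assoc, ← mul_inv, h2, inv_mul_cancel₀ (ne_of_gt hvv)]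
  · rw [mulVec_smul, hAv, smul_comm]

lemma unit_entry_abs_le {u : Fin 3 → ℝ} (hu : u ⬝ᵥ u = 1) (i : Fin 3) : |u i| ≤ 1 := by
  rw [abs_le_one_iff_mul_self_le_one]
  have : u i * u i ≤ u ⬝ᵥ u := by
    rw [dotProduct]
    exact Finset.single_le_sum (f := fun j => u j * u j) (fun j _ => mul_self_nonneg (u j))
      (Finset.mem_univ i)
  linarith [hu ▸ this]

lemma quad_abs_le {u : Fin 3 → ℝ} (hu : u ⬝ᵥ u = 1) (M : Matrix (Fin 3) (Fin 3) ℝ) :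
    |u ⬝ᵥ M.mulVec u| ≤ ∑ i : Fin 3, ∑ j : Fin 3, |M i j| := by
  simp only [dotProduct, mulVec]
  calc |∑ i, u i * (fun j => M i j) ⬝ᵥ u| ≤ ∑ i, |u i * (fun j => M i j) ⬝ᵥ u| :=
        Finset.abs_sum_le_sum_abs _ _
    _ ≤ ∑ i : Fin 3, ∑ j : Fin 3, |M i j| := by
        apply Finset.sum_le_sum
        intro i _
        rw [abs_mul, dotProduct]
        calc |u i| * |∑ j, M i j * u j| ≤ 1 * |∑ j, M i j * u j| := by
              apply mul_le_mul_of_nonneg_right (unit_entry_abs_le hu i) (abs_nonneg _)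
          _ = |∑ j, M i j * u j| := one_mul _
          _ ≤ ∑ j, |M i j * u j| := Finset.abs_sum_le_sum_abs _ _
          _ ≤ ∑ j, |M i j| := by
              apply Finset.sum_le_sum
              intro j _
              rw [abs_mul]
              calc |M i j| * |u j| ≤ |M i j| * 1 :=
                    mul_le_mul_of_nonneg_left (unit_entry_abs_le hu j) (abs_nonneg _)
                _ = |M i j| := mul_one _

lemma coe_basis_ne_zero {A : Matrix (Fin 3) (Fin 3) ℝ} (hA : A.IsHermitian) (i : Fin 3) :
    ⇑(hA.eigenvectorBasis i) ≠ (0 : Fin 3 → ℝ) := by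
  have h := hA.eigenvectorBasis.orthonormal.ne_zero i
  intro hc; apply h; apply (WithLp.equiv 2 _).injective; simpa using hc

lemma eig_mem {A : Matrix (Fin 3) (Fin 3) ℝ} (hA : A.IsHermitian) (i : Fin 3) :
    hA.eigenvalues i ∈ eigSet A :=
  ⟨_, coe_basis_ne_zero hA i, hA.mulVec_eigenvectorBasis i⟩

lemma det_L_eq_zero {A : Matrix (Fin 3) (Fin 3) ℝ} {L : ℝ} (hmem : L ∈ eigSet A) :
    (L • (1 : Matrix (Fin 3) (Fin 3) ℝ) - A).det = 0 := by
  obtain ⟨v, hv, hAv⟩ := hmem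
  rw [← Matrix.exists_mulVec_eq_zero_iff]
  refine ⟨v, hv, ?_⟩
  rw [sub_mulVec, smul_mulVec, one_mulVec, hAv, sub_self]

lemma eig_top_unique {A : Matrix (Fin 3) (Fin 3) ℝ} {L : ℝ} (hA : A.IsHermitian)
    (hrank : Module.finrank ℝ (Module.End.eigenspace (Matrix.toLin' A) L) = 1)
    {i j : Fin 3} (hi : hA.eigenvalues i = L) (hj : hA.eigenvalues j = L) : i = j := by
  by_contra hij
  set S := Module.End.eigenspace (Matrix.toLin' A) L with hS
  have hmemS : ∀ k : Fin 3, hA.eigenvalues k = L → (⇑(hA.eigenvectorBasis k) : Fin 3 → ℝ) ∈ S := by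
    intro k hk
    rw [hS, Module.End.mem_eigenspace_iff, Matrix.toLin'_apply, hA.mulVec_eigenvectorBasis, hk]
  have hli : LinearIndependent ℝ
      (fun t : Fin 2 => (⇑(hA.eigenvectorBasis (if t = 0 then i else j)) : Fin 3 → ℝ)) := by
    have h1 : LinearIndependent ℝ (fun k : Fin 3 => hA.eigenvectorBasis k) :=
      hA.eigenvectorBasis.orthonormal.linearIndependent
    have h2 : LinearIndependent ℝ
        (fun t : Fin 2 => hA.eigenvectorBasis (if t = 0 then i else j)) := by
      apply h1.comp
      intro s t hst
      fin_cases s <;> fin_cases t <;> simp_all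
    exact h2.map' (WithLp.linearEquiv 2 ℝ (Fin 3 → ℝ)).toLinearMap (LinearEquiv.ker _)
  have hliS : LinearIndependent ℝ (fun t : Fin 2 =>
      (⟨_, hmemS (if t = 0 then i else j) (by split <;> assumption)⟩ : S)) := by
    apply LinearIndependent.of_comp S.subtype
    exact hli
  have hcard := hliS.fintype_card_le_finrank
  rw [hrank] at hcard
  simp at hcard

lemma det_smul_one_sub {A : Matrix (Fin 3) (Fin 3) ℝ} (hA : A.IsHermitian) (t : ℝ) :
    (t • (1 : Matrix (Fin 3) (Fin 3) ℝ) - A).det = ∏ i, (t - hA.eigenvalues i) := by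
  set U : Matrix (Fin 3) (Fin 3) ℝ := (hA.eigenvectorUnitary : Matrix (Fin 3) (Fin 3) ℝ) with hU
  have hUU : U * star U = 1 := (Matrix.mem_unitaryGroup_iff).mp hA.eigenvectorUnitary.2
  have hD : diagonal ((RCLike.ofReal : ℝ → ℝ) ∘ hA.eigenvalues) = diagonal hA.eigenvalues := by
    congr 1
  have hAeq : A = U * diagonal hA.eigenvalues * star U := by
    conv_lhs => rw [hA.spectral_theorem]
    rw [hD]
    rfl
  have hdec : t • (1 : Matrix (Fin 3) (Fin 3) ℝ) - A
      = U * (t • (1 : Matrix (Fin 3) (Fin 3) ℝ) - diagonal hA.eigenvalues) * star U := by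
    rw [mul_sub, sub_mul, ← hAeq]
    congr 1
    rw [mul_smul_comm, smul_mul_assoc, mul_one, hUU]
  rw [hdec, det_mul, det_mul]
  have hdetU : U.det * (star U).det = 1 := by
    rw [← det_mul, hUU, det_one]
  rw [show U.det * (t • (1 : Matrix (Fin 3) (Fin 3) ℝ) - diagonal hA.eigenvalues).det
        * (star U).det
      = (U.det * (star U).det)
        * (t • (1 : Matrix (Fin 3) (Fin 3) ℝ) - diagonal hA.eigenvalues).det from by ring,
    hdetU, one_mul]
  rw [smul_one_eq_diagonal, diagonal_sub, det_diagonal]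

lemma hasDerivAt_cubic (a b c t : ℝ) :
    HasDerivAt (fun t : ℝ => (t - a) * ((t - b) * (t - c)))
      ((t - b) * (t - c) + (t - a) * ((t - c) + (t - b))) t := by
  have h1 : HasDerivAt (fun t : ℝ => t - a) 1 t := (hasDerivAt_id t).sub_const a
  have h2 : HasDerivAt (fun t : ℝ => t - b) 1 t := (hasDerivAt_id t).sub_const b
  have h3 : HasDerivAt (fun t : ℝ => t - c) 1 t := (hasDerivAt_id t).sub_const c
  have h23 : HasDerivAt (fun t : ℝ => (t - b) * (t - c)) (1 * (t - c) + (t - b) * 1) t :=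
    h2.mul h3
  have h := h1.mul h23
  exact h.congr_deriv (by ring)

/-- Rayleigh bound. -/
lemma rayleigh_le (hsymm : StiffSymm a) (hgap : GapCondition a)
    (x : Fin 3 → ℝ) {p : Fin 3 → ℝ} (hp : p ≠ 0) (v : Fin 3 → ℝ) :
    v ⬝ᵥ (christoffel a x p).mulVec v ≤ lam1 a x p * (v ⬝ᵥ v) := by
  set A := christoffel a x p with hA
  set L := lam1 a x p with hL
  set B : Matrix (Fin 3) (Fin 3) ℝ := L • (1 : Matrix (Fin 3) (Fin 3) ℝ) - A with hB
  have hBh : B.IsHermitian := by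
    have h1 : (L • (1 : Matrix (Fin 3) (Fin 3) ℝ)).IsHermitian := by
      simp [Matrix.IsHermitian, Matrix.conjTranspose_smul]
    exact h1.sub (christoffel_isHermitian hsymm x p)
  have hBmul : ∀ w : Fin 3 → ℝ, B.mulVec w = L • w - A.mulVec w := by
    intro w
    rw [hB, Matrix.sub_mulVec, Matrix.smul_mulVec, Matrix.one_mulVec]
  have heig : ∀ i, 0 ≤ hBh.eigenvalues i := by
    intro i
    have hmv := hBh.mulVec_eigenvectorBasis i
    have hne : ⇑(hBh.eigenvectorBasis i) ≠ (0 : Fin 3 → ℝ) := coe_basis_ne_zero hBh i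
    rw [hBmul] at hmv
    have hA' : A.mulVec ⇑(hBh.eigenvectorBasis i)
        = (L - hBh.eigenvalues i) • ⇑(hBh.eigenvectorBasis i) := by
      have h2 := sub_eq_iff_eq_add.mp hmv
      rw [sub_smul]
      rw [eq_comm, sub_eq_iff_eq_add]
      linear_combination (norm := module) h2
    have hmem : (L - hBh.eigenvalues i) ∈ eigSet A := ⟨_, hne, hA'⟩
    rcases (hgap x p hp).2.1 _ hmem with h | h
    · rw [← hL] at h; linarith [h]
    · rw [← hL] at h; linarith [h]
  have hpsd : B.PosSemidef := hBh.posSemidef_iff_eigenvalues_nonneg.mpr heig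
  have h0 := hpsd.dotProduct_mulVec_nonneg v
  simp only [star_trivial, RCLike.re_to_real] at h0
  rw [hBmul] at h0
  rw [dotProduct_sub, dotProduct_smul, smul_eq_mul] at h0
  linarith

/-- Rayleigh bound for unit vectors, valid for all `p` (including `p = 0`). -/
lemma rayleigh_unit_le (hsymm : StiffSymm a) (hgap : GapCondition a)
    (x p : Fin 3 → ℝ) {u : Fin 3 → ℝ} (hu : u ⬝ᵥ u = 1) :
    u ⬝ᵥ (christoffel a x p).mulVec u ≤ lam1 a x p := by
  by_cases hp : p = 0
  · subst hp
    rw [christoffel_zero, lam1_zero]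
    simp
  · have := rayleigh_le hsymm hgap x hp u
    rwa [hu, mul_one] at this

/-- value of `lam1` as a Rayleigh quotient at a unit top eigenvector. -/
lemma lam1_eq_quad {A : Matrix (Fin 3) (Fin 3) ℝ} {L : ℝ} {u : Fin 3 → ℝ}
    (hu : u ⬝ᵥ u = 1) (hAu : A.mulVec u = L • u) :
    u ⬝ᵥ A.mulVec u = L := by
  rw [hAu, dotProduct_smul, smul_eq_mul, hu, mul_one]

/-- one-sided Lipschitz-type bound for `lam1`. -/
lemma lam1_sub_le (hsymm : StiffSymm a) (hgap : GapCondition a)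
    (x : Fin 3 → ℝ) {p q : Fin 3 → ℝ} (hp : p ≠ 0) (hq : q ≠ 0) :
    lam1 a x q - lam1 a x p
      ≤ ∑ i : Fin 3, ∑ j : Fin 3, |christoffel a x q i j - christoffel a x p i j| := by
  obtain ⟨u, hu, hAu⟩ := exists_unit_eigvec (hgap x q hq).1
  have h1 : lam1 a x q = u ⬝ᵥ (christoffel a x q).mulVec u := (lam1_eq_quad hu hAu).symm
  have h2 : u ⬝ᵥ (christoffel a x p).mulVec u ≤ lam1 a x p := rayleigh_unit_le hsymm hgap x p hu
  have h3 := quad_abs_le hu (christoffel a x q - christoffel a x p)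
  have h4 : u ⬝ᵥ (christoffel a x q - christoffel a x p).mulVec u
      = u ⬝ᵥ (christoffel a x q).mulVec u - u ⬝ᵥ (christoffel a x p).mulVec u := by
    rw [sub_mulVec, dotProduct_sub]
  rw [h4] at h3
  have h5 : ∀ i j : Fin 3, |(christoffel a x q - christoffel a x p) i j|
      = |christoffel a x q i j - christoffel a x p i j| := by
    intro i j; rw [Matrix.sub_apply]
  calc lam1 a x q - lam1 a x p
      ≤ u ⬝ᵥ (christoffel a x q).mulVec u - u ⬝ᵥ (christoffel a x p).mulVec u := by
        rw [← h1]; linarith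
    _ ≤ |u ⬝ᵥ (christoffel a x q).mulVec u - u ⬝ᵥ (christoffel a x p).mulVec u| := le_abs_self _
    _ ≤ ∑ i : Fin 3, ∑ j : Fin 3, |(christoffel a x q - christoffel a x p) i j| := h3
    _ = ∑ i : Fin 3, ∑ j : Fin 3, |christoffel a x q i j - christoffel a x p i j| := by
        exact Finset.sum_congr rfl fun i _ => Finset.sum_congr rfl fun j _ => h5 i j

lemma lam1_continuousAt (hsymm : StiffSymm a) (hgap : GapCondition a)
    (x : Fin 3 → ℝ) {p : Fin 3 → ℝ} (hp : p ≠ 0) :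
    ContinuousAt (fun q : Fin 3 → ℝ => lam1 a x q) p := by
  rw [ContinuousAt, tendsto_iff_dist_tendsto_zero]
  have hopen : ∀ᶠ q in nhds p, q ≠ (0 : Fin 3 → ℝ) :=
    (isOpen_compl_singleton).eventually_mem (by simpa using hp)
  set S : (Fin 3 → ℝ) → ℝ := fun q =>
    ∑ i : Fin 3, ∑ j : Fin 3, |christoffel a x q i j - christoffel a x p i j| with hSdef
  have hScont : ContinuousAt S p := by
    have : Continuous S :=
      continuous_finset_sum _ fun i _ => continuous_finset_sum _ fun j _ =>
        ((contDiff_entry x i j).continuous.sub continuous_const).abs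
    exact this.continuousAt
  have hSzero : S p = 0 := by simp [hSdef]
  apply squeeze_zero'
  · exact Filter.Eventually.of_forall fun q => dist_nonneg
  · filter_upwards [hopen] with q hq
    rw [Real.dist_eq, abs_sub_le_iff]
    constructor
    · exact lam1_sub_le hsymm hgap x hp hq
    · have := lam1_sub_le hsymm hgap x hq hp
      calc lam1 a x p - lam1 a x q
          ≤ ∑ i : Fin 3, ∑ j : Fin 3, |christoffel a x p i j - christoffel a x q i j| := this
        _ = S q := by
            exact Finset.sum_congr rfl fun i _ => Finset.sum_congr rfl fun j _ =>
              abs_sub_comm _ _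
  · have := hScont.tendsto
    rwa [hSzero] at this

lemma contDiff_F (x : Fin 3 → ℝ) :
    ContDiff ℝ (⊤ : ℕ∞) (fun z : (Fin 3 → ℝ) × ℝ =>
      (z.2 • (1 : Matrix (Fin 3) (Fin 3) ℝ) - christoffel a x z.1).det) := by
  have hentry : ∀ i l : Fin 3, ContDiff ℝ (⊤ : ℕ∞) (fun z : (Fin 3 → ℝ) × ℝ =>
      (z.2 • (1 : Matrix (Fin 3) (Fin 3) ℝ) - christoffel a x z.1) i l) := by
    intro i l
    have h : (fun z : (Fin 3 → ℝ) × ℝ =>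
        (z.2 • (1 : Matrix (Fin 3) (Fin 3) ℝ) - christoffel a x z.1) i l)
        = fun z : (Fin 3 → ℝ) × ℝ => z.2 * (1 : Matrix (Fin 3) (Fin 3) ℝ) i l
            - christoffel a x z.1 i l := by
      funext z; simp [Matrix.sub_apply, Matrix.smul_apply, smul_eq_mul]
    rw [h]
    exact (contDiff_snd.mul contDiff_const).sub ((contDiff_entry x i l).comp contDiff_fst)
  have hdet : (fun z : (Fin 3 → ℝ) × ℝ =>
      (z.2 • (1 : Matrix (Fin 3) (Fin 3) ℝ) - christoffel a x z.1).det)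
      = fun z : (Fin 3 → ℝ) × ℝ =>
        (fun M : Matrix (Fin 3) (Fin 3) ℝ =>
          M 0 0 * M 1 1 * M 2 2 - M 0 0 * M 1 2 * M 2 1 - M 0 1 * M 1 0 * M 2 2
            + M 0 1 * M 1 2 * M 2 0 + M 0 2 * M 1 0 * M 2 1 - M 0 2 * M 1 1 * M 2 0)
          (z.2 • (1 : Matrix (Fin 3) (Fin 3) ℝ) - christoffel a x z.1) := by
    funext z
    rw [Matrix.det_fin_three]
  rw [hdet]
  exact ((((((hentry 0 0).mul (hentry 1 1)).mul (hentry 2 2)).sub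
    (((hentry 0 0).mul (hentry 1 2)).mul (hentry 2 1))).sub
    (((hentry 0 1).mul (hentry 1 0)).mul (hentry 2 2))).add
    (((hentry 0 1).mul (hentry 1 2)).mul (hentry 2 0))).add
    (((hentry 0 2).mul (hentry 1 0)).mul (hentry 2 1))
    |>.sub (((hentry 0 2).mul (hentry 1 1)).mul (hentry 2 0))

/-- `lam1` is smooth at every `p ≠ 0`. -/
lemma lam1_contDiffAt (hsymm : StiffSymm a) (hgap : GapCondition a)
    (x : Fin 3 → ℝ) {p : Fin 3 → ℝ} (hp : p ≠ 0) :
    ContDiffAt ℝ (⊤ : ℕ∞) (fun q : Fin 3 → ℝ => lam1 a x q) p := by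
  set A := christoffel a x p with hAdef
  have hA : A.IsHermitian := christoffel_isHermitian hsymm x p
  set L := lam1 a x p with hLdef
  set e := hA.eigenvalues with hedef
  have hcubic : ∀ t : ℝ, (t • (1 : Matrix (Fin 3) (Fin 3) ℝ) - A).det
      = (t - e 0) * ((t - e 1) * (t - e 2)) := by
    intro t; rw [det_smul_one_sub hA, Fin.prod_univ_three]; ring
  have hle : ∀ i, e i ≤ L := fun i => by
    rcases (hgap x p hp).2.1 _ (eig_mem hA i) with h | h
    · exact le_of_eq h
    · exact le_of_lt h
  have hzero : (L • (1 : Matrix (Fin 3) (Fin 3) ℝ) - A).det = 0 := det_L_eq_zero (hgap x p hp).1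
  have hex : ∃ i, e i = L := by
    have h0 := hzero
    rw [det_smul_one_sub hA] at h0
    obtain ⟨i, _, hi⟩ := Finset.prod_eq_zero_iff.mp h0
    exact ⟨i, by linarith [sub_eq_zero.mp hi]⟩
  obtain ⟨i₀, hi₀⟩ := hex
  have huniq : ∀ i, i ≠ i₀ → e i < L := by
    intro i hi
    rcases lt_or_eq_of_le (hle i) with h | h
    · exact h
    · exact absurd (eig_top_unique hA (hgap x p hp).2.2 h hi₀) hi
  set D := (L - e 1) * (L - e 2) + (L - e 0) * ((L - e 2) + (L - e 1)) with hDdef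
  have hDpos : 0 < D := by
    rw [hDdef]
    fin_cases i₀
    · have h1 := huniq 1 (by decide)
      have h2 := huniq 2 (by decide)
      have h0 : e 0 = L := hi₀
      nlinarith
    · have h1 := huniq 0 (by decide)
      have h2 := huniq 2 (by decide)
      have h0 : e 1 = L := hi₀
      nlinarith
    · have h1 := huniq 0 (by decide)
      have h2 := huniq 1 (by decide)
      have h0 : e 2 = L := hi₀
      nlinarith
  set F : (Fin 3 → ℝ) × ℝ → ℝ :=
    fun z => (z.2 • (1 : Matrix (Fin 3) (Fin 3) ℝ) - christoffel a x z.1).det with hFdef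
  have hFsm : ContDiff ℝ (⊤ : ℕ∞) F := contDiff_F x
  have hFdiff : DifferentiableAt ℝ F (p, L) := (hFsm.differentiable (by simp)).differentiableAt
  set DF := fderiv ℝ F (p, L) with hDFdef
  have hDFval : DF ((0 : Fin 3 → ℝ), (1 : ℝ)) = D := by
    have h1 : HasDerivAt (fun t : ℝ => F (p, t)) (DF ((0 : Fin 3 → ℝ), (1 : ℝ))) L := by
      have hline : HasDerivAt (fun t : ℝ => ((p, t) : (Fin 3 → ℝ) × ℝ))
          (((0 : Fin 3 → ℝ), (1 : ℝ)) : (Fin 3 → ℝ) × ℝ) L :=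
        (hasDerivAt_const L p).prodMk (hasDerivAt_id L)
      exact hFdiff.hasFDerivAt.comp_hasDerivAt L hline
    have h2 : HasDerivAt (fun t : ℝ => F (p, t)) D L := by
      have heq : (fun t : ℝ => F (p, t)) = fun t => (t - e 0) * ((t - e 1) * (t - e 2)) := by
        funext t
        rw [hFdef]
        exact hcubic t
      rw [heq, hDdef]
      exact hasDerivAt_cubic (e 0) (e 1) (e 2) L
    exact h1.unique h2
  -- build the continuous linear equivalence
  have hsplit : ∀ (u : Fin 3 → ℝ) (s : ℝ), DF (u, s) = DF (u, 0) + s * DF (0, 1) := by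
    intro u s
    have h : ((u, s) : (Fin 3 → ℝ) × ℝ) = (u, 0) + s • ((0 : Fin 3 → ℝ), (1 : ℝ)) := by
      ext <;> simp
    rw [h, map_add, _root_.map_smul, smul_eq_mul]
  set fwd : ((Fin 3 → ℝ) × ℝ) →L[ℝ] ((Fin 3 → ℝ) × ℝ) :=
    (ContinuousLinearMap.fst ℝ (Fin 3 → ℝ) ℝ).prod DF with hfwd
  set bwd : ((Fin 3 → ℝ) × ℝ) →L[ℝ] ((Fin 3 → ℝ) × ℝ) :=
    (ContinuousLinearMap.fst ℝ (Fin 3 → ℝ) ℝ).prod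
      (D⁻¹ • ((ContinuousLinearMap.snd ℝ (Fin 3 → ℝ) ℝ)
        - DF.comp ((ContinuousLinearMap.fst ℝ (Fin 3 → ℝ) ℝ).prod
            (0 : ((Fin 3 → ℝ) × ℝ) →L[ℝ] ℝ)))) with hbwd
  have hD0 : D ≠ 0 := ne_of_gt hDpos
  set Φ' : ((Fin 3 → ℝ) × ℝ) ≃L[ℝ] ((Fin 3 → ℝ) × ℝ) :=
    ContinuousLinearEquiv.equivOfInverse fwd bwd
      (by
        rintro ⟨u, s⟩
        simp only [hfwd, hbwd, ContinuousLinearMap.prod_apply, ContinuousLinearMap.coe_fst',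
          ContinuousLinearMap.coe_snd', ContinuousLinearMap.smul_apply,
          ContinuousLinearMap.sub_apply, ContinuousLinearMap.comp_apply,
          ContinuousLinearMap.zero_apply]
        refine Prod.ext rfl ?_
        simp only [smul_eq_mul]
        rw [hsplit u s, hDFval]
        field_simp
        ring)
      (by
        rintro ⟨u, t⟩
        simp only [hfwd, hbwd, ContinuousLinearMap.prod_apply, ContinuousLinearMap.coe_fst',
          ContinuousLinearMap.coe_snd', ContinuousLinearMap.smul_apply,
          ContinuousLinearMap.sub_apply, ContinuousLinearMap.comp_apply,
          ContinuousLinearMap.zero_apply]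
        refine Prod.ext rfl ?_
        rw [hsplit u _, hDFval]
        simp only [smul_eq_mul]
        field_simp
        ring) with hΦ'
  set Φ : (Fin 3 → ℝ) × ℝ → (Fin 3 → ℝ) × ℝ := fun z => (z.1, F z) with hΦdef
  have hΦsm : ContDiffAt ℝ (⊤ : ℕ∞) Φ (p, L) := (contDiff_fst.prodMk hFsm).contDiffAt
  have hΦf : HasFDerivAt Φ (Φ' : ((Fin 3 → ℝ) × ℝ) →L[ℝ] ((Fin 3 → ℝ) × ℝ)) (p, L) := by
    have hcoe : (Φ' : ((Fin 3 → ℝ) × ℝ) →L[ℝ] ((Fin 3 → ℝ) × ℝ)) = fwd := rfl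
    rw [hcoe, hfwd]
    exact ((ContinuousLinearMap.fst ℝ (Fin 3 → ℝ) ℝ).hasFDerivAt).prodMk hFdiff.hasFDerivAt
  set inv : (Fin 3 → ℝ) × ℝ → (Fin 3 → ℝ) × ℝ := hΦsm.localInverse hΦf (by simp) with hinvdef
  have hΦpL : Φ (p, L) = (p, 0) := Prod.ext rfl hzero
  have hinv_sm : ContDiffAt ℝ (⊤ : ℕ∞) inv (p, 0) := by
    have h := hΦsm.to_localInverse hΦf (by simp)
    rwa [hΦpL] at h
  have hleft : ∀ᶠ z in nhds (p, L), inv (Φ z) = z :=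
    (hΦsm.hasStrictFDerivAt' hΦf (by simp)).eventually_left_inverse
  have htend : Filter.Tendsto (fun q : Fin 3 → ℝ => ((q, lam1 a x q) : (Fin 3 → ℝ) × ℝ))
      (nhds p) (nhds ((p, L) : (Fin 3 → ℝ) × ℝ)) :=
    Filter.Tendsto.prodMk_nhds Filter.tendsto_id (lam1_continuousAt hsymm hgap x hp)
  have hne0 : ∀ᶠ q in nhds p, q ≠ (0 : Fin 3 → ℝ) := by
    have := isOpen_compl_singleton (x := (0 : Fin 3 → ℝ)) |>.eventually_mem
      (by simpa using hp)
    filter_upwards [this] with q hq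
    simpa using hq
  have hkey : ∀ᶠ q in nhds p, lam1 a x q = (inv (q, 0)).2 := by
    filter_upwards [htend.eventually hleft, hne0] with q h1 h2
    have hF0 : F (q, lam1 a x q) = 0 := det_L_eq_zero (hgap x q h2).1
    have hΦq : Φ (q, lam1 a x q) = (q, 0) := Prod.ext rfl hF0
    rw [hΦq] at h1
    exact (congrArg Prod.snd h1).symm
  have hcomp : ContDiffAt ℝ (⊤ : ℕ∞) (fun q : Fin 3 → ℝ => (inv (q, 0)).2) p := by
    have h1 : ContDiffAt ℝ (⊤ : ℕ∞) (fun q : Fin 3 → ℝ => inv (q, 0)) p :=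
      hinv_sm.comp p ((contDiff_id.prodMk contDiff_const).contDiffAt)
    exact (contDiff_snd.contDiffAt).comp p h1
  exact hcomp.congr_of_eventuallyEq hkey

/-! ### Second derivative machinery -/

lemma hasDerivAt_line {φ : (Fin 3 → ℝ) → ℝ} {U : Set (Fin 3 → ℝ)} (hU : IsOpen U)
    (hφ : ContDiffOn ℝ (⊤ : ℕ∞) φ U) (p w : Fin 3 → ℝ) {t : ℝ} (ht : p + t • w ∈ U) :
    HasDerivAt (fun s : ℝ => φ (p + s • w)) ((fderiv ℝ φ (p + t • w)) w) t := by
  have hline : HasDerivAt (fun s : ℝ => p + s • w) w t := by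
    simpa using ((hasDerivAt_id t).smul_const w).const_add p
  have hdiff : DifferentiableAt ℝ φ (p + t • w) :=
    (hφ.contDiffAt (hU.mem_nhds ht)).differentiableAt (by simp)
  exact hdiff.hasFDerivAt.comp_hasDerivAt t hline

lemma hasDerivAt_deriv_line {φ : (Fin 3 → ℝ) → ℝ} {U : Set (Fin 3 → ℝ)} (hU : IsOpen U)
    (hφ : ContDiffOn ℝ (⊤ : ℕ∞) φ U) (p w : Fin 3 → ℝ) {t : ℝ} (ht : p + t • w ∈ U) :
    HasDerivAt (deriv (fun s : ℝ => φ (p + s • w)))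
      (fderiv ℝ (fderiv ℝ φ) (p + t • w) w w) t := by
  have hφ' : ContDiffOn ℝ (⊤ : ℕ∞) (fderiv ℝ φ) U := by
    have h := (contDiffOn_infty_iff_fderiv_of_isOpen hU).mp (by exact_mod_cast hφ)
    exact_mod_cast h.2
  have hd2 : DifferentiableAt ℝ (fderiv ℝ φ) (p + t • w) :=
    (hφ'.contDiffAt (hU.mem_nhds ht)).differentiableAt (by simp)
  have hψ : HasFDerivAt (fun q => (fderiv ℝ φ q) w)
      ((ContinuousLinearMap.apply ℝ ℝ w).comp (fderiv ℝ (fderiv ℝ φ) (p + t • w)))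
      (p + t • w) :=
    (ContinuousLinearMap.apply ℝ ℝ w).hasFDerivAt.comp _ hd2.hasFDerivAt
  have hline : HasDerivAt (fun s : ℝ => p + s • w) w t := by
    simpa using ((hasDerivAt_id t).smul_const w).const_add p
  have hcomp : HasDerivAt (fun s : ℝ => (fderiv ℝ φ (p + s • w)) w)
      (fderiv ℝ (fderiv ℝ φ) (p + t • w) w w) t := by
    have h := hψ.comp_hasDerivAt t hline
    exact h
  have hV : {s : ℝ | p + s • w ∈ U} ∈ nhds t := by
    have hcont : Continuous fun s : ℝ => p + s • w :=
      continuous_const.add (continuous_id.smul continuous_const)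
    exact (hU.preimage hcont).mem_nhds ht
  have hev : deriv (fun s : ℝ => φ (p + s • w)) =ᶠ[nhds t]
      fun s => (fderiv ℝ φ (p + s • w)) w := by
    filter_upwards [hV] with s hs
    exact (hasDerivAt_line hU hφ p w hs).deriv
  exact hcomp.congr_of_eventuallyEq hev

lemma quad_hasDerivAt (c0 c1 c2 t : ℝ) :
    HasDerivAt (fun s : ℝ => c0 + c1 * s + c2 * (s * s)) (c1 + c2 * (t + t)) t := by
  have h := ((hasDerivAt_const t c0).add ((hasDerivAt_id t).const_mul c1)).add
    (((hasDerivAt_id t).mul (hasDerivAt_id t)).const_mul c2)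
  exact h.congr_deriv (by simp only [id]; ring)

lemma quad_deriv_hasDerivAt (c0 c1 c2 t : ℝ) :
    HasDerivAt (deriv (fun s : ℝ => c0 + c1 * s + c2 * (s * s))) (2 * c2) t := by
  have heq : deriv (fun s : ℝ => c0 + c1 * s + c2 * (s * s)) = fun u => c1 + c2 * (u + u) :=
    funext fun u => (quad_hasDerivAt c0 c1 c2 u).deriv
  rw [heq]
  have h := (hasDerivAt_const t c1).add
    (((hasDerivAt_id t).add (hasDerivAt_id t)).const_mul c2)
  exact h.congr_deriv (by ring)

/-- One-dimensional second-derivative test at an interior minimum. -/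
lemma second_deriv_test {g k : ℝ → ℝ} {δ : ℝ} (hδ : 0 < δ)
    (hg0 : g 0 = 0) (hgnn : ∀ t, 0 ≤ g t)
    (hd : ∀ t ∈ Set.Ioo (-δ) δ, DifferentiableAt ℝ g t)
    (hd' : ∀ t ∈ Set.Ioo (-δ) δ, HasDerivAt (deriv g) (k t) t)
    (hk : ContinuousAt k 0) :
    0 ≤ k 0 := by
  by_contra hneg
  push_neg at hneg
  have hev : ∀ᶠ s in nhds (0 : ℝ), k s < 0 := hk.tendsto.eventually_lt_const hneg
  obtain ⟨ε, hε, hball⟩ := Metric.eventually_nhds_iff.mp hev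
  set t := min δ ε / 2 with htdef
  have ht0 : 0 < t := by positivity
  have htδ : t < δ := by
    have : min δ ε ≤ δ := min_le_left _ _
    rw [htdef]; linarith
  have htε : t < ε := by
    have : min δ ε ≤ ε := min_le_right _ _
    rw [htdef]; linarith
  have hsub : Set.Icc (0 : ℝ) t ⊆ Set.Ioo (-δ) δ := by
    intro s hs
    exact ⟨by linarith [hs.1], by linarith [hs.2]⟩
  have hg'0 : deriv g 0 = 0 := by
    have hmin : IsLocalMin g 0 := Filter.Eventually.of_forall fun s => by
      rw [hg0]; exact hgnn s
    exact hmin.deriv_eq_zero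
  -- first MVT
  obtain ⟨c, hc, hgc⟩ := exists_deriv_eq_slope g ht0
    (fun s hs => ((hd s (hsub hs)).continuousAt).continuousWithinAt)
    (fun s hs => (hd s (hsub (Set.Ioo_subset_Icc_self hs))).differentiableWithinAt)
  have hslope : 0 ≤ deriv g c := by
    rw [hgc, hg0, sub_zero, sub_zero]
    exact div_nonneg (hgnn t) (le_of_lt ht0)
  have hcIcc : Set.Icc (0 : ℝ) c ⊆ Set.Ioo (-δ) δ := by
    intro s hs
    exact ⟨by linarith [hs.1], by linarith [hs.2, hc.2]⟩
  -- second MVT on [0, c] for deriv g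
  obtain ⟨c', hc', hgc'⟩ := exists_deriv_eq_slope (deriv g) hc.1
    (fun s hs => ((hd' s (hcIcc hs)).continuousAt).continuousWithinAt)
    (fun s hs => (hd' s (hcIcc (Set.Ioo_subset_Icc_self hs))).differentiableAt.differentiableWithinAt)
  have hval : deriv (deriv g) c' = k c' := (hd' c' (hcIcc (Set.Ioo_subset_Icc_self hc'))).deriv
  have hpos : 0 ≤ deriv (deriv g) c' := by
    rw [hgc', hg'0, sub_zero, sub_zero]
    exact div_nonneg hslope (le_of_lt hc.1)
  have hneg' : k c' < 0 := by
    apply hball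
    rw [Real.dist_eq, sub_zero, abs_of_pos hc'.1]
    linarith [hc'.2, hc.2]
  rw [hval] at hpos
  linarith

end Lam1Aux

/-- Under smoothness, positive definiteness and the gap condition, for
every fixed `x ∈ ℝ³` the function `p ↦ λ¹(x,p)` is `C^∞` on `ℝ³ \\ {0}` and its Hessian at
every `p ≠ 0`, viewed as a symmetric bilinear form, is positive definite. -/
theorem lam1_fiberwise_smooth_and_hessian_posDef
    (a : (Fin 3 → ℝ) → Fin 3 → Fin 3 → Fin 3 → Fin 3 → ℝ)
    (hsymm : StiffSymm a) (hsmooth : StiffSmooth a)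
    (hpos : ChristoffelPosDef a) (hgap : GapCondition a) :
    ∀ x : Fin 3 → ℝ,
      ContDiffOn ℝ (⊤ : ℕ∞) (fun p : Fin 3 → ℝ => lam1 a x p)
        {p : Fin 3 → ℝ | p ≠ 0} ∧
      ∀ p : Fin 3 → ℝ, p ≠ 0 →
        (∀ v w : Fin 3 → ℝ,
            fderiv ℝ (fderiv ℝ fun p' => lam1 a x p') p v w =
              fderiv ℝ (fderiv ℝ fun p' => lam1 a x p') p w v) ∧
        (∀ v : Fin 3 → ℝ, v ≠ 0 →
            0 < fderiv ℝ (fderiv ℝ fun p' => lam1 a x p') p v v) := by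
  intro x
  have hsm : ∀ {p : Fin 3 → ℝ}, p ≠ 0 →
      ContDiffAt ℝ (⊤ : ℕ∞) (fun q : Fin 3 → ℝ => lam1 a x q) p :=
    fun hp => Lam1Aux.lam1_contDiffAt hsymm hgap x hp
  refine ⟨fun p hp => (hsm hp).contDiffWithinAt, ?_⟩
  intro p hp
  constructor
  · -- symmetry of the Hessian
    intro v w
    exact (hsm hp).isSymmSndFDerivAt (by
      simp
      exact WithTop.coe_le_coe.mpr le_top) v w
  · intro v hv
    set φ : (Fin 3 → ℝ) → ℝ := fun p' => lam1 a x p' with hφdef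
    set U : Set (Fin 3 → ℝ) := {q | q ≠ 0} with hUdef
    have hU : IsOpen U := isOpen_ne
    have hpU : p ∈ U := hp
    have hφU : ContDiffOn ℝ (⊤ : ℕ∞) φ U := fun q hq => (hsm hq).contDiffWithinAt
    obtain ⟨u, hu, hAu⟩ := Lam1Aux.exists_unit_eigvec (hgap x p hp).1
    have hu0 : u ≠ 0 := by
      intro h
      rw [h] at hu
      simp [dotProduct] at hu
    set M := christoffel a x u with hMdef
    have hM : M.PosDef := hpos x u hu0
    set c0 : ℝ := p ⬝ᵥ M.mulVec p with hc0
    set c1 : ℝ := p ⬝ᵥ M.mulVec v + v ⬝ᵥ M.mulVec p with hc1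
    set c2 : ℝ := v ⬝ᵥ M.mulVec v with hc2
    have hc2pos : 0 < c2 := by
      have h := hM.dotProduct_mulVec_pos hv
      rw [hc2]
      simpa using h
    set Q : ℝ → ℝ := fun s => c0 + c1 * s + c2 * (s * s) with hQdef
    have hQval : ∀ s : ℝ, Q s = (p + s • v) ⬝ᵥ M.mulVec (p + s • v) := by
      intro s
      rw [hQdef]
      simp only [mulVec_add, mulVec_smul, dotProduct_add, add_dotProduct, dotProduct_smul,
        smul_dotProduct, smul_eq_mul, hc0, hc1, hc2]
      ring
    set g : ℝ → ℝ := fun s => φ (p + s • v) - Q s with hgdef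
    have hgnn : ∀ s, 0 ≤ g s := by
      intro s
      have h1 : u ⬝ᵥ (christoffel a x (p + s • v)).mulVec u ≤ lam1 a x (p + s • v) :=
        Lam1Aux.rayleigh_unit_le hsymm hgap x (p + s • v) hu
      have h2 : u ⬝ᵥ (christoffel a x (p + s • v)).mulVec u
          = (p + s • v) ⬝ᵥ M.mulVec (p + s • v) :=
        Lam1Aux.swap_identity hsymm x (p + s • v) u
      have h3 : Q s = u ⬝ᵥ (christoffel a x (p + s • v)).mulVec u := by
        rw [hQval s, ← h2]
      rw [hgdef]
      simp only [hφdef]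
      rw [h3]
      linarith
    have hg0 : g 0 = 0 := by
      have h0 : p + (0 : ℝ) • v = p := by simp
      have h3 : Q 0 = u ⬝ᵥ (christoffel a x p).mulVec u := by
        rw [hQval 0, h0, ← Lam1Aux.swap_identity hsymm x p u]
      have h4 : u ⬝ᵥ (christoffel a x p).mulVec u = lam1 a x p :=
        Lam1Aux.lam1_eq_quad hu hAu
      rw [hgdef]
      simp only [hφdef, h0]
      rw [h3, h4, sub_self]
    have hVopen : IsOpen {s : ℝ | p + s • v ∈ U} :=
      hU.preimage (continuous_const.add (continuous_id.smul continuous_const))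
    have h0V : (0 : ℝ) ∈ {s : ℝ | p + s • v ∈ U} := by
      have h0 : p + (0 : ℝ) • v = p := by simp
      simp only [Set.mem_setOf_eq, h0]
      exact hpU
    obtain ⟨δ, hδ, hballδ⟩ := Metric.isOpen_iff.mp hVopen 0 h0V
    have hIoo : Set.Ioo (-δ) δ ⊆ {s : ℝ | p + s • v ∈ U} := by
      intro s hs
      apply hballδ
      rw [Metric.mem_ball, Real.dist_eq, sub_zero]
      exact abs_lt.mpr ⟨hs.1, hs.2⟩
    set k : ℝ → ℝ := fun s => fderiv ℝ (fderiv ℝ φ) (p + s • v) v v - 2 * c2 with hkdef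
    have hd : ∀ s ∈ Set.Ioo (-δ) δ, DifferentiableAt ℝ g s := by
      intro s hs
      have h1 := Lam1Aux.hasDerivAt_line hU hφU p v (hIoo hs)
      exact (h1.sub (Lam1Aux.quad_hasDerivAt c0 c1 c2 s)).differentiableAt
    have hd' : ∀ s ∈ Set.Ioo (-δ) δ, HasDerivAt (deriv g) (k s) s := by
      intro s hs
      have hVs : {r : ℝ | p + r • v ∈ U} ∈ nhds s := hVopen.mem_nhds (hIoo hs)
      have hev : deriv g =ᶠ[nhds s]
          fun r => deriv (fun y : ℝ => φ (p + y • v)) r - deriv Q r := by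
        filter_upwards [hVs] with r hr
        rw [hgdef]
        exact deriv_sub (Lam1Aux.hasDerivAt_line hU hφU p v hr).differentiableAt
          (Lam1Aux.quad_hasDerivAt c0 c1 c2 r).differentiableAt
      have hmain : HasDerivAt
          (fun r => deriv (fun y : ℝ => φ (p + y • v)) r - deriv Q r) (k s) s := by
        rw [hkdef]
        exact (Lam1Aux.hasDerivAt_deriv_line hU hφU p v (hIoo hs)).sub
          (Lam1Aux.quad_deriv_hasDerivAt c0 c1 c2 s)
      exact hmain.congr_of_eventuallyEq hev
    have hkcont : ContinuousAt k 0 := by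
      have hφ' : ContDiffOn ℝ (⊤ : ℕ∞) (fderiv ℝ φ) U := by
        have h := (contDiffOn_infty_iff_fderiv_of_isOpen hU).mp (by exact_mod_cast hφU)
        exact_mod_cast h.2
      have hφ'' : ContinuousOn (fderiv ℝ (fderiv ℝ φ)) U := by
        have h := (contDiffOn_infty_iff_fderiv_of_isOpen hU).mp (by exact_mod_cast hφ')
        exact h.2.continuousOn
      have hline : ContinuousAt (fun s : ℝ => p + s • v) 0 :=
        (continuous_const.add (continuous_id.smul continuous_const)).continuousAt
      have h1 : ContinuousAt (fun s : ℝ => fderiv ℝ (fderiv ℝ φ) (p + s • v)) 0 := by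
        have hmem : U ∈ nhds (p + (0 : ℝ) • v) := by
          have h0 : p + (0 : ℝ) • v = p := by simp
          rw [h0]
          exact hU.mem_nhds hpU
        exact ContinuousAt.comp (x := (0 : ℝ)) (g := fderiv ℝ (fderiv ℝ φ))
          (f := fun s : ℝ => p + s • v) (hφ''.continuousAt hmem) hline
      have h2a : ContinuousAt (fun s : ℝ => fderiv ℝ (fderiv ℝ φ) (p + s • v) v) 0 :=
        ContinuousAt.comp (isBoundedBilinearMap_apply.continuous.continuousAt)
          (h1.prodMk continuousAt_const)
      have h2 : ContinuousAt (fun s : ℝ => fderiv ℝ (fderiv ℝ φ) (p + s • v) v v) 0 :=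
        ContinuousAt.comp (isBoundedBilinearMap_apply.continuous.continuousAt)
          (h2a.prodMk continuousAt_const)
      exact h2.sub continuousAt_const
    have hfinal := Lam1Aux.second_deriv_test hδ hg0 hgnn hd hd' hkcont
    have hk0 : k 0 = fderiv ℝ (fderiv ℝ φ) p v v - 2 * c2 := by
      simp [hkdef]
    rw [hk0] at hfinal
    linarith

end
end

section
/- Let n ≥ 1, let F be a Minkowski norm on ℝⁿ, and let α : ℝⁿ \ {0} → ℝ be a C^∞ function that is nonnegative and positively homogeneous of degree 0 (α(t·y) = α(y) for all t > 0 and y ≠ 0). For s ∈ ℝ define H_s : ℝⁿ → ℝ by H_s(y) = (1 + s·α(y)) · F(y) for y ≠ 0 and H_s(0) = 0. Then there exists ε > 0 such that for every s ∈ ℝ with |s| < ε, the function H_s is a Minkowski norm on ℝⁿ. -/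
open Set Filter Topology Function


private lemma isOpen_ne_zero' (n : ℕ) : IsOpen {y : Fin n → ℝ | y ≠ 0} :=
  isOpen_compl_singleton

private lemma fderiv_one_homog {n : ℕ} {f : (Fin n → ℝ) → ℝ}
    (hf : ContDiffOn ℝ (⊤ : ℕ∞) f {y : Fin n → ℝ | y ≠ 0})
    (hhom : ∀ (t : ℝ) (z : Fin n → ℝ), 0 < t → z ≠ 0 → f (t • z) = t ^ 2 * f z)
    {t : ℝ} (ht : 0 < t) {y : Fin n → ℝ} (hy : y ≠ 0) :
    fderiv ℝ f (t • y) = t • fderiv ℝ f y := by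
  have hty : t • y ≠ 0 := smul_ne_zero (ne_of_gt ht) hy
  have hdiff : ∀ z : Fin n → ℝ, z ≠ 0 → DifferentiableAt ℝ f z := fun z hz =>
    (hf.contDiffAt ((isOpen_ne_zero' n).mem_nhds hz)).differentiableAt (by norm_cast)
  set L : (Fin n → ℝ) →L[ℝ] (Fin n → ℝ) := t • ContinuousLinearMap.id ℝ (Fin n → ℝ) with hL
  have hLd : HasFDerivAt (fun z : Fin n → ℝ => t • z) L y := L.hasFDerivAt
  have hcomp : HasFDerivAt (fun z => f (t • z)) ((fderiv ℝ f (t • y)).comp L) y :=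
    ((hdiff _ hty).hasFDerivAt).comp y hLd
  have heq : (fun z : Fin n → ℝ => f (t • z)) =ᶠ[𝓝 y] fun z => t ^ 2 * f z := by
    filter_upwards [(isOpen_ne_zero' n).mem_nhds hy] with z hz
    exact hhom t z ht hz
  have h1 : (fderiv ℝ f (t • y)).comp L = t ^ 2 • fderiv ℝ f y := by
    rw [← hcomp.fderiv, heq.fderiv_eq]
    exact fderiv_const_mul (hdiff y hy) (t ^ 2)
  ext v
  have h2 : fderiv ℝ f (t • y) (t • v) = t ^ 2 * fderiv ℝ f y v := by
    have := congrArg (fun M : (Fin n → ℝ) →L[ℝ] ℝ => M v) h1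
    simpa [hL] using this
  rw [map_smul, smul_eq_mul] at h2
  have h3 : t * (fderiv ℝ f (t • y) v) = t * (t * fderiv ℝ f y v) := by
    rw [h2]; ring
  have h4 := mul_left_cancel₀ (ne_of_gt ht) h3
  simpa [smul_eq_mul] using h4

private lemma fderiv2_zero_homog {n : ℕ} {f : (Fin n → ℝ) → ℝ}
    (hf : ContDiffOn ℝ (⊤ : ℕ∞) f {y : Fin n → ℝ | y ≠ 0})
    (hhom : ∀ (t : ℝ) (z : Fin n → ℝ), 0 < t → z ≠ 0 → f (t • z) = t ^ 2 * f z)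
    {t : ℝ} (ht : 0 < t) {y : Fin n → ℝ} (hy : y ≠ 0) :
    fderiv ℝ (fderiv ℝ f) (t • y) = fderiv ℝ (fderiv ℝ f) y := by
  have hty : t • y ≠ 0 := smul_ne_zero (ne_of_gt ht) hy
  have hDf : ContDiffOn ℝ (⊤ : ℕ∞) (fderiv ℝ f) {y : Fin n → ℝ | y ≠ 0} :=
    hf.fderiv_of_isOpen (isOpen_ne_zero' n) (by norm_cast)
  have hdiff : ∀ z : Fin n → ℝ, z ≠ 0 → DifferentiableAt ℝ (fderiv ℝ f) z := fun z hz =>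
    (hDf.contDiffAt ((isOpen_ne_zero' n).mem_nhds hz)).differentiableAt (by norm_cast)
  set L : (Fin n → ℝ) →L[ℝ] (Fin n → ℝ) := t • ContinuousLinearMap.id ℝ (Fin n → ℝ) with hL
  have hLd : HasFDerivAt (fun z : Fin n → ℝ => t • z) L y := L.hasFDerivAt
  have hcomp : HasFDerivAt (fun z => fderiv ℝ f (t • z))
      ((fderiv ℝ (fderiv ℝ f) (t • y)).comp L) y :=
    ((hdiff _ hty).hasFDerivAt).comp y hLd
  have heq : (fun z : Fin n → ℝ => fderiv ℝ f (t • z)) =ᶠ[𝓝 y] fun z => t • fderiv ℝ f z := by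
    filter_upwards [(isOpen_ne_zero' n).mem_nhds hy] with z hz
    exact fderiv_one_homog hf hhom ht hz
  have h1 : (fderiv ℝ (fderiv ℝ f) (t • y)).comp L = t • fderiv ℝ (fderiv ℝ f) y := by
    rw [← hcomp.fderiv, heq.fderiv_eq]
    exact fderiv_const_smul (hdiff y hy) t
  ext v w
  have h2 := congrArg (fun M : (Fin n → ℝ) →L[ℝ] (Fin n → ℝ) →L[ℝ] ℝ => M v w) h1
  simp only [ContinuousLinearMap.comp_apply, ContinuousLinearMap.smul_apply, hL,
    ContinuousLinearMap.id_apply, smul_eq_mul] at h2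
  rw [map_smul] at h2
  simp only [ContinuousLinearMap.smul_apply, smul_eq_mul] at h2
  exact mul_left_cancel₀ (ne_of_gt ht) h2



/-- A Minkowski norm on `ℝⁿ`: a continuous function, vanishing only at the origin, smooth
away from the origin, positively homogeneous of degree one, whose Hessian of `½F²` at each
`y ≠ 0` is a symmetric positive definite bilinear form. -/
def IsMinkowskiNorm (n : ℕ) (F : (Fin n → ℝ) → ℝ) : Prop :=
  Continuous F ∧
  F 0 = 0 ∧
  (∀ y : Fin n → ℝ, y ≠ 0 → 0 < F y) ∧
  ContDiffOn ℝ (⊤ : ℕ∞) F {y : Fin n → ℝ | y ≠ 0} ∧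
  (∀ (t : ℝ) (y : Fin n → ℝ), 0 < t → F (t • y) = t * F y) ∧
  ∀ y : Fin n → ℝ, y ≠ 0 →
    (∀ v w : Fin n → ℝ,
        fderiv ℝ (fderiv ℝ fun z => (1 / 2) * F z ^ 2) y v w =
          fderiv ℝ (fderiv ℝ fun z => (1 / 2) * F z ^ 2) y w v) ∧
    (∀ v : Fin n → ℝ, v ≠ 0 →
        0 < fderiv ℝ (fderiv ℝ fun z => (1 / 2) * F z ^ 2) y v v)

set_option maxHeartbeats 1000000 in
/-- Perturbing a Minkowski norm `F` by `H_s(y) = (1 + s α(y)) F(y)`,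
where `α` is smooth away from `0`, nonnegative and positively homogeneous of degree `0`,
yields a Minkowski norm for all sufficiently small `|s|`. -/
theorem perturbed_minkowski_norm (n : ℕ) (hn : 1 ≤ n)
    (F : (Fin n → ℝ) → ℝ) (hF : IsMinkowskiNorm n F)
    (α : (Fin n → ℝ) → ℝ)
    (hα_smooth : ContDiffOn ℝ (⊤ : ℕ∞) α {y : Fin n → ℝ | y ≠ 0})
    (hα_nonneg : ∀ y : Fin n → ℝ, y ≠ 0 → 0 ≤ α y)
    (hα_homog : ∀ (t : ℝ) (y : Fin n → ℝ), 0 < t → y ≠ 0 → α (t • y) = α y) :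
    ∃ ε > 0, ∀ s : ℝ, |s| < ε →
      IsMinkowskiNorm n fun y => (1 + s * α y) * F y := by
  obtain ⟨hFc, hF0, hFpos, hFsm, hFhom, hFhess⟩ := hF
  have hop : IsOpen {y : Fin n → ℝ | y ≠ 0} := isOpen_ne_zero' n
  have hsphere_sub : Metric.sphere (0 : Fin n → ℝ) 1 ⊆ {y : Fin n → ℝ | y ≠ 0} := by
    intro y hy
    simp only [mem_sphere_iff_norm, sub_zero] at hy
    intro h
    rw [h] at hy
    simp at hy
  -- bound on α over the unit sphere
  obtain ⟨C, hC⟩ := (isCompact_sphere (0 : Fin n → ℝ) 1).exists_bound_of_continuousOn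
    (hα_smooth.continuousOn.mono hsphere_sub)
  set D := max C 0 with hD
  have hD0 : (0:ℝ) ≤ D := le_max_right _ _
  have hαbound : ∀ z : Fin n → ℝ, z ≠ 0 → |α z| ≤ D := by
    intro z hz
    have hz0 : (0:ℝ) < ‖z‖ := norm_pos_iff.mpr hz
    have hmem : ‖z‖⁻¹ • z ∈ Metric.sphere (0 : Fin n → ℝ) 1 := by
      simp [norm_smul, abs_of_pos (inv_pos.mpr hz0), inv_mul_cancel₀ (ne_of_gt hz0)]
    have h1 := hC _ hmem
    rw [hα_homog (‖z‖⁻¹) z (inv_pos.mpr hz0) hz] at h1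
    calc |α z| = ‖α z‖ := (Real.norm_eq_abs _).symm
    _ ≤ C := h1
    _ ≤ D := le_max_left _ _
  -- continuity of the parameterized Hessian
  have hFat : ∀ z : Fin n → ℝ, z ≠ 0 → ContDiffAt ℝ (⊤ : ℕ∞) F z := fun z hz =>
    hFsm.contDiffAt (hop.mem_nhds hz)
  have hαat : ∀ z : Fin n → ℝ, z ≠ 0 → ContDiffAt ℝ (⊤ : ℕ∞) α z := fun z hz =>
    hα_smooth.contDiffAt (hop.mem_nhds hz)
  have hB : ∀ p : ℝ × (Fin n → ℝ), p.2 ≠ 0 → ContinuousAt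
      (fun p : ℝ × (Fin n → ℝ) =>
        fderiv ℝ (fderiv ℝ (fun z => (1/2 : ℝ) * ((1 + p.1 * α z) * F z) ^ 2)) p.2) p := by
    have hcore : ∀ q : ℝ × (Fin n → ℝ), q.2 ≠ 0 → ContDiffAt ℝ (⊤ : ℕ∞)
        (fun q : ℝ × (Fin n → ℝ) => (1/2 : ℝ) * ((1 + q.1 * α q.2) * F q.2) ^ 2) q := by
      intro q hq
      exact contDiffAt_const.mul
        ((((contDiffAt_const.add (contDiffAt_fst.mul ((hαat q.2 hq).comp q contDiffAt_snd))).mul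
          ((hFat q.2 hq).comp q contDiffAt_snd))).pow 2)
    have hlvl2 : ∀ w : ((ℝ × (Fin n → ℝ)) × (Fin n → ℝ)) × (Fin n → ℝ), w.2 ≠ 0 →
        ContDiffAt ℝ (⊤ : ℕ∞)
          (fun w : ((ℝ × (Fin n → ℝ)) × (Fin n → ℝ)) × (Fin n → ℝ) =>
            (1/2 : ℝ) * ((1 + w.1.1.1 * α w.2) * F w.2) ^ 2) w := by
      intro w hw
      have hπ : ContDiffAt ℝ (⊤ : ℕ∞)
          (fun w : ((ℝ × (Fin n → ℝ)) × (Fin n → ℝ)) × (Fin n → ℝ) => (w.1.1.1, w.2)) w :=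
        ((contDiffAt_fst.fst).fst).prodMk contDiffAt_snd
      exact (hcore (w.1.1.1, w.2) hw).comp (f := fun w : ((ℝ × (Fin n → ℝ)) × (Fin n → ℝ)) × (Fin n → ℝ) => (w.1.1.1, w.2)) w hπ
    have hB2 : ∀ q : (ℝ × (Fin n → ℝ)) × (Fin n → ℝ), q.2 ≠ 0 →
        ContDiffAt ℝ (⊤ : ℕ∞) (fun q : (ℝ × (Fin n → ℝ)) × (Fin n → ℝ) =>
          fderiv ℝ (fun z => (1/2 : ℝ) * ((1 + q.1.1 * α z) * F z) ^ 2) q.2) q := by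
      intro q hq
      exact ContDiffAt.fderiv
        (f := fun (w : (ℝ × (Fin n → ℝ)) × (Fin n → ℝ)) z =>
          (1/2 : ℝ) * ((1 + w.1.1 * α z) * F z) ^ 2)
        (g := Prod.snd) (hlvl2 (q, q.2) hq) contDiffAt_snd (by norm_cast)
    intro p hp
    have := ContDiffAt.fderiv
      (f := fun (q : ℝ × (Fin n → ℝ)) z =>
        fderiv ℝ (fun z' => (1/2 : ℝ) * ((1 + q.1 * α z') * F z') ^ 2) z)
      (g := Prod.snd) (m := 1) (hB2 (p, p.2) hp) contDiffAt_snd (by norm_cast)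
    exact this.continuousAt
  -- the quadratic-form evaluation map and the tube lemma
  have hU : IsOpen {q : ℝ × ((Fin n → ℝ) × (Fin n → ℝ)) | q.2.1 ≠ 0} := by
    have : {q : ℝ × ((Fin n → ℝ) × (Fin n → ℝ)) | q.2.1 ≠ 0} =
        (fun q : ℝ × ((Fin n → ℝ) × (Fin n → ℝ)) => q.2.1) ⁻¹' {y | y ≠ 0} := rfl
    rw [this]
    exact hop.preimage (continuous_fst.comp continuous_snd)
  have hΦc : ContinuousOn (fun q : ℝ × ((Fin n → ℝ) × (Fin n → ℝ)) =>
      fderiv ℝ (fderiv ℝ (fun z => (1/2 : ℝ) * ((1 + q.1 * α z) * F z) ^ 2)) q.2.1 q.2.2 q.2.2)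
      {q : ℝ × ((Fin n → ℝ) × (Fin n → ℝ)) | q.2.1 ≠ 0} := by
    intro q hq
    have h1 : ContinuousAt (fun q : ℝ × ((Fin n → ℝ) × (Fin n → ℝ)) =>
        fderiv ℝ (fderiv ℝ (fun z => (1/2 : ℝ) * ((1 + q.1 * α z) * F z) ^ 2)) q.2.1) q :=
      ContinuousAt.comp (x := q)
        (g := fun p : ℝ × (Fin n → ℝ) =>
          fderiv ℝ (fderiv ℝ (fun z => (1/2 : ℝ) * ((1 + p.1 * α z) * F z) ^ 2)) p.2)
        (f := fun q : ℝ × ((Fin n → ℝ) × (Fin n → ℝ)) => (q.1, q.2.1))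
        (hB (q.1, q.2.1) hq) (continuousAt_fst.prodMk (continuousAt_snd.fst))
    have h2 : ContinuousAt (fun q : ℝ × ((Fin n → ℝ) × (Fin n → ℝ)) =>
        fderiv ℝ (fderiv ℝ (fun z => (1/2 : ℝ) * ((1 + q.1 * α z) * F z) ^ 2)) q.2.1 q.2.2) q :=
      (isBoundedBilinearMap_apply.continuous.continuousAt).comp
        (h1.prodMk (continuousAt_snd.snd))
    have h3 : ContinuousAt (fun q : ℝ × ((Fin n → ℝ) × (Fin n → ℝ)) =>
        fderiv ℝ (fderiv ℝ (fun z => (1/2 : ℝ) * ((1 + q.1 * α z) * F z) ^ 2))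
          q.2.1 q.2.2 q.2.2) q :=
      (isBoundedBilinearMap_apply.continuous.continuousAt).comp
        (h2.prodMk (continuousAt_snd.snd))
    exact h3.continuousWithinAt
  have hVo : IsOpen ({q : ℝ × ((Fin n → ℝ) × (Fin n → ℝ)) | q.2.1 ≠ 0} ∩
      (fun q : ℝ × ((Fin n → ℝ) × (Fin n → ℝ)) =>
        fderiv ℝ (fderiv ℝ (fun z => (1/2 : ℝ) * ((1 + q.1 * α z) * F z) ^ 2))
          q.2.1 q.2.2 q.2.2) ⁻¹' Ioi 0) :=
    hΦc.isOpen_inter_preimage hU isOpen_Ioi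
  have hsubset : ({(0:ℝ)} ×ˢ
      (Metric.sphere (0 : Fin n → ℝ) 1 ×ˢ Metric.sphere (0 : Fin n → ℝ) 1)) ⊆
      ({q : ℝ × ((Fin n → ℝ) × (Fin n → ℝ)) | q.2.1 ≠ 0} ∩
      (fun q : ℝ × ((Fin n → ℝ) × (Fin n → ℝ)) =>
        fderiv ℝ (fderiv ℝ (fun z => (1/2 : ℝ) * ((1 + q.1 * α z) * F z) ^ 2))
          q.2.1 q.2.2 q.2.2) ⁻¹' Ioi 0) := by
    rintro ⟨s₀, y, v⟩ ⟨hs₀, hy, hv⟩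
    simp only [mem_singleton_iff] at hs₀
    subst hs₀
    have hy0 : y ≠ 0 := hsphere_sub hy
    have hv0 : v ≠ 0 := hsphere_sub hv
    refine ⟨hy0, ?_⟩
    have hfe : (fun z : Fin n → ℝ => (1/2 : ℝ) * ((1 + (0:ℝ) * α z) * F z) ^ 2) =
        fun z => (1/2 : ℝ) * F z ^ 2 := by
      funext z; ring
    show (0:ℝ) < fderiv ℝ (fderiv ℝ
      (fun z => (1/2 : ℝ) * ((1 + (0:ℝ) * α z) * F z) ^ 2)) y v v
    rw [hfe]
    exact (hFhess y hy0).2 v hv0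
  obtain ⟨uS, wS, huSo, -, hu0S, hKw, huw⟩ := generalized_tube_lemma isCompact_singleton
    ((isCompact_sphere (0 : Fin n → ℝ) 1).prod (isCompact_sphere (0 : Fin n → ℝ) 1))
    hVo hsubset
  obtain ⟨ε₀, hε₀, hball⟩ := Metric.isOpen_iff.mp huSo 0 (hu0S rfl)
  refine ⟨min ε₀ (1 / (D + 1)), lt_min hε₀ (by positivity), ?_⟩
  intro s hs
  have hsε₀ : |s| < ε₀ := lt_of_lt_of_le hs (min_le_left _ _)
  have hsD : |s| * (D + 1) < 1 := by
    have h := lt_of_lt_of_le hs (min_le_right _ _)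
    rwa [lt_div_iff₀ (by positivity)] at h
  have hs1 : |s| < 1 := by nlinarith [abs_nonneg s]
  have hsmall : ∀ z : Fin n → ℝ, z ≠ 0 → |s * α z| < 1 := by
    intro z hz
    calc |s * α z| = |s| * |α z| := abs_mul _ _
    _ ≤ |s| * D := mul_le_mul_of_nonneg_left (hαbound z hz) (abs_nonneg s)
    _ ≤ |s| * (D + 1) := mul_le_mul_of_nonneg_left (by linarith) (abs_nonneg s)
    _ < 1 := hsD
  have hone : ∀ z : Fin n → ℝ, z ≠ 0 → 0 < 1 + s * α z := by
    intro z hz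
    have h1 := (abs_lt.mp (hsmall z hz)).1
    linarith
  have hH0 : (1 + s * α 0) * F 0 = 0 := by rw [hF0, mul_zero]
  have hHsm : ContDiffOn ℝ (⊤ : ℕ∞) (fun y => (1 + s * α y) * F y) {y : Fin n → ℝ | y ≠ 0} :=
    (contDiffOn_const.add (contDiffOn_const.mul hα_smooth)).mul hFsm
  have hHbound : ∀ z : Fin n → ℝ, ‖(1 + s * α z) * F z‖ ≤ (1 + D) * F z := by
    intro z
    rcases eq_or_ne z 0 with rfl | hz
    · rw [hH0]; simp [hF0]
    · rw [Real.norm_eq_abs, abs_mul, abs_of_pos (hFpos z hz)]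
      refine mul_le_mul_of_nonneg_right ?_ (le_of_lt (hFpos z hz))
      have h1 : |1 + s * α z| ≤ 1 + |s * α z| := by
        have := abs_add_le (1:ℝ) (s * α z); simpa using this
      have h2 : |s * α z| ≤ D := by
        rw [abs_mul]
        calc |s| * |α z| ≤ 1 * D :=
          mul_le_mul (le_of_lt hs1) (hαbound z hz) (abs_nonneg _) zero_le_one
        _ = D := one_mul D
      linarith
  refine ⟨?_, hH0, fun y hy => mul_pos (hone y hy) (hFpos y hy), hHsm, ?_, ?_⟩
  · -- continuity
    rw [continuous_iff_continuousAt]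
    intro y
    rcases eq_or_ne y 0 with rfl | hy
    · have hg : Tendsto (fun z : Fin n → ℝ => (1 + D) * F z) (𝓝 0) (𝓝 0) := by
        have hgc : Continuous (fun z : Fin n → ℝ => (1 + D) * F z) :=
          continuous_const.mul hFc
        have := hgc.tendsto (0 : Fin n → ℝ)
        simpa [hF0] using this
      have ht := squeeze_zero_norm hHbound hg
      simpa [ContinuousAt, hF0] using ht
    · exact (hHsm.contDiffAt (hop.mem_nhds hy)).continuousAt
  · -- homogeneity
    intro t y ht
    rcases eq_or_ne y 0 with rfl | hy
    · show (1 + s * α (t • (0 : Fin n → ℝ))) * F (t • 0) = t * ((1 + s * α 0) * F 0)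
      rw [smul_zero, hF0]; ring
    · show (1 + s * α (t • y)) * F (t • y) = t * ((1 + s * α y) * F y)
      rw [hα_homog t y ht hy, hFhom t y ht]; ring
  · -- Hessian
    intro y hy
    have hfs : ContDiffOn ℝ (⊤ : ℕ∞) (fun z => (1/2 : ℝ) * ((1 + s * α z) * F z) ^ 2)
        {y : Fin n → ℝ | y ≠ 0} := contDiffOn_const.mul (hHsm.pow 2)
    constructor
    · intro v w
      have hHs_at : ContDiffAt ℝ (⊤ : ℕ∞) (fun z => (1/2 : ℝ) * ((1 + s * α z) * F z) ^ 2) y :=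
        hfs.contDiffAt (hop.mem_nhds hy)
      exact hHs_at.isSymmSndFDerivAt (by simp; exact WithTop.coe_le_coe.mpr le_top) v w
    · intro v hv
      have hy0 : (0:ℝ) < ‖y‖ := norm_pos_iff.mpr hy
      have hv0 : (0:ℝ) < ‖v‖ := norm_pos_iff.mpr hv
      have hu'_mem : ‖y‖⁻¹ • y ∈ Metric.sphere (0 : Fin n → ℝ) 1 := by
        simp [norm_smul, abs_of_pos (inv_pos.mpr hy0), inv_mul_cancel₀ (ne_of_gt hy0)]
      have hw'_mem : ‖v‖⁻¹ • v ∈ Metric.sphere (0 : Fin n → ℝ) 1 := by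
        simp [norm_smul, abs_of_pos (inv_pos.mpr hv0), inv_mul_cancel₀ (ne_of_gt hv0)]
      have hu'0 : ‖y‖⁻¹ • y ≠ 0 := hsphere_sub hu'_mem
      have hy_eq : y = ‖y‖ • (‖y‖⁻¹ • y) := (smul_inv_smul₀ (ne_of_gt hy0) y).symm
      have hv_eq : v = ‖v‖ • (‖v‖⁻¹ • v) := (smul_inv_smul₀ (ne_of_gt hv0) v).symm
      have h2hom : ∀ (t : ℝ) (z : Fin n → ℝ), 0 < t → z ≠ 0 →
          (fun z => (1/2 : ℝ) * ((1 + s * α z) * F z) ^ 2) (t • z) =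
          t ^ 2 * ((fun z => (1/2 : ℝ) * ((1 + s * α z) * F z) ^ 2) z) := by
        intro t z ht hz
        simp only []
        rw [hα_homog t z ht hz, hFhom t z ht]
        ring
      have hhess_eq := fderiv2_zero_homog hfs h2hom hy0 hu'0
      have hmem : ((s, (‖y‖⁻¹ • y, ‖v‖⁻¹ • v)) : ℝ × ((Fin n → ℝ) × (Fin n → ℝ))) ∈
          uS ×ˢ wS := by
        refine ⟨?_, hKw ⟨hu'_mem, hw'_mem⟩⟩
        apply hball
        simp only [Metric.mem_ball, Real.dist_eq, sub_zero]
        exact hsε₀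
      have hpos := (huw hmem).2
      simp only [mem_preimage, mem_Ioi] at hpos
      show (0:ℝ) < fderiv ℝ (fderiv ℝ
          (fun z => (1/2 : ℝ) * ((1 + s * α z) * F z) ^ 2)) y v v
      have step : fderiv ℝ (fderiv ℝ
          (fun z => (1/2 : ℝ) * ((1 + s * α z) * F z) ^ 2)) y v v =
          ‖v‖ ^ 2 * (fderiv ℝ (fderiv ℝ
          (fun z => (1/2 : ℝ) * ((1 + s * α z) * F z) ^ 2)) (‖y‖⁻¹ • y)
          (‖v‖⁻¹ • v) (‖v‖⁻¹ • v)) := by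
        conv_lhs => rw [hy_eq, hv_eq]
        rw [hhess_eq, map_smul]
        simp only [ContinuousLinearMap.smul_apply, map_smul, smul_eq_mul]
        ring
      rw [step]
      exact mul_pos (pow_pos hv0 2) hpos
end
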